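/- arXiv:1507.06213 — 8 statements merged into one kernel-verified Lean document; each statement's English description precedes it below -/
import Mathlib

section
/- Let K be a field and n ≥ 2. Let A be an n×n alternating matrix over K, written in block form A = [[P, C₀],[−C₀ᵀ, 0]] with P an (n-1)×(n-1) alternating matrix and C₀ ∈ K^{n-1}. Let C ∈ K^{n-1} and set N = [[0_{(n-1)×(n-1)}, C],[−Cᵀ, 0]]. If A + t·N is singular for every t ∈ K, then Cᵀ · P^ad · C = 0, where P^ad denotes the adjugate (classical adjoint) of P. -/
open Matrix

lemma border_det {K : Type*} [CommRing K] {m : Type*} [Fintype m] [DecidableEq m]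
    (P : Matrix m m K) (b c : m → K) :
    (Matrix.fromBlocks P (Matrix.of fun i (_ : Unit) => b i)
      (Matrix.of fun (_ : Unit) j => c j) (0 : Matrix Unit Unit K)).det
      = -(c ⬝ᵥ P.adjugate *ᵥ b) := by
  set M := Matrix.fromBlocks P (Matrix.of fun i (_ : Unit) => b i)
      (Matrix.of fun (_ : Unit) j => c j) (0 : Matrix Unit Unit K) with hM
  have key : ∀ i j : m,
      ((M.updateRow (Sum.inr ()) (Pi.single (Sum.inl j) 1)).updateRow (Sum.inl i)
        (Pi.single (Sum.inr ()) 1)).det = -(P.adjugate j i) := by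
    intro i j
    set N := ((M.updateRow (Sum.inr ()) (Pi.single (Sum.inl j) 1)).updateRow (Sum.inl i)
        (Pi.single (Sum.inr ()) 1)) with hN
    have hswap : N.submatrix (Equiv.swap (Sum.inl i) (Sum.inr ())) id
        = Matrix.fromBlocks (P.updateRow i (Pi.single j 1))
          (Matrix.of fun k (_ : Unit) => if k = i then (0 : K) else b k)
          (0 : Matrix Unit m K) (1 : Matrix Unit Unit K) := by
      ext (k | k) (l | l) <;>
        simp [hN, hM, Matrix.updateRow_apply, Equiv.swap_apply_def, Pi.single_apply] <;>
        split_ifs <;> simp_all [Pi.single_apply]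
    have hperm := Matrix.det_permute (Equiv.swap (Sum.inl i) (Sum.inr ())) N
    rw [hswap, Matrix.det_fromBlocks_zero₂₁, Matrix.det_one, mul_one,
      Equiv.Perm.sign_swap (by simp)] at hperm
    have hc : ((-1 : ℤˣ) : K) * N.det = -N.det := by simp
    rw [hc] at hperm
    rw [Matrix.adjugate_apply]
    linear_combination hperm
  have step2 : ∀ j : m,
      (M.updateRow (Sum.inr ()) (Pi.single (Sum.inl j) 1)).det
        = -((P.adjugate *ᵥ b) j) := by
    intro j
    set Mj := M.updateRow (Sum.inr ()) (Pi.single (Sum.inl j) 1) with hMj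
    rw [Matrix.det_eq_sum_mul_adjugate_col Mj (Sum.inr ()), Fintype.sum_sum_type]
    have h1 : ∀ i : m, Mj (Sum.inl i) (Sum.inr ()) = b i := by
      intro i; simp [hMj, hM, Matrix.updateRow_apply]
    have h2 : Mj (Sum.inr ()) (Sum.inr ()) = 0 := by
      simp [hMj, Pi.single_apply]
    have h3 : ∀ i : m, Mj.adjugate (Sum.inr ()) (Sum.inl i)
        = -(P.adjugate j i) := by
      intro i
      rw [Matrix.adjugate_apply]
      exact key i j
    simp only [h1, h2, h3, zero_mul, Finset.sum_const, Finset.card_univ, smul_eq_mul]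
    simp [Matrix.mulVec, dotProduct, mul_comm, Finset.sum_neg_distrib]
  rw [Matrix.det_eq_sum_mul_adjugate_row M (Sum.inr ()), Fintype.sum_sum_type]
  have g1 : ∀ j : m, M (Sum.inr ()) (Sum.inl j) = c j := by intro j; simp [hM]
  have g2 : M (Sum.inr ()) (Sum.inr ()) = 0 := by simp [hM]
  have g3 : ∀ j : m, M.adjugate (Sum.inl j) (Sum.inr ()) = -((P.adjugate *ᵥ b) j) := by
    intro j; rw [Matrix.adjugate_apply]; exact step2 j
  simp only [g1, g2, g3, zero_mul, mul_neg]
  simp [dotProduct]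

/-- If `A` is an `n × n` alternating matrix with blocks `[[P, C₀],[−C₀ᵀ, 0]]` and
`N = [[0, C],[−Cᵀ, 0]]`, and `A + t • N` is singular for all `t`, then
`Cᵀ · adjugate P · C = 0`. -/
theorem stmt1 {K : Type*} [Field K] (n : ℕ) (hn : 2 ≤ n)
    (P : Matrix (Fin (n - 1)) (Fin (n - 1)) K)
    (hP : ∀ X : Fin (n - 1) → K, X ⬝ᵥ P *ᵥ X = 0)
    (C₀ C : Fin (n - 1) → K)
    (hsing : ∀ t : K,
      (Matrix.fromBlocks P (Matrix.of fun i (_ : Unit) => C₀ i)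
          (Matrix.of fun (_ : Unit) j => -C₀ j) (0 : Matrix Unit Unit K)
        + t • Matrix.fromBlocks (0 : Matrix (Fin (n - 1)) (Fin (n - 1)) K)
          (Matrix.of fun i (_ : Unit) => C i)
          (Matrix.of fun (_ : Unit) j => -C j) (0 : Matrix Unit Unit K)).det = 0) :
    C ⬝ᵥ P.adjugate *ᵥ C = 0 := by
  -- The determinant condition gives a quadratic identity in `t`.
  have hv : ∀ t : K, (C₀ + t • C) ⬝ᵥ P.adjugate *ᵥ (C₀ + t • C) = 0 := by
    intro t
    have h := hsing t
    have hblocks :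
        (Matrix.fromBlocks P (Matrix.of fun i (_ : Unit) => C₀ i)
          (Matrix.of fun (_ : Unit) j => -C₀ j) (0 : Matrix Unit Unit K)
        + t • Matrix.fromBlocks (0 : Matrix (Fin (n - 1)) (Fin (n - 1)) K)
          (Matrix.of fun i (_ : Unit) => C i)
          (Matrix.of fun (_ : Unit) j => -C j) (0 : Matrix Unit Unit K))
        = Matrix.fromBlocks P (Matrix.of fun i (_ : Unit) => (C₀ + t • C) i)
          (Matrix.of fun (_ : Unit) j => (-(C₀ + t • C)) j) (0 : Matrix Unit Unit K) := by
      ext (i | i) (j | j) <;>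
        simp [Matrix.add_apply, Matrix.smul_apply, smul_eq_mul] <;> ring
    rw [hblocks, border_det] at h
    rw [neg_dotProduct, neg_neg] at h
    exact h
  have hq : ∀ t : K,
      C₀ ⬝ᵥ P.adjugate *ᵥ C₀ + t * (C₀ ⬝ᵥ P.adjugate *ᵥ C) + t * (C ⬝ᵥ P.adjugate *ᵥ C₀)
        + t * t * (C ⬝ᵥ P.adjugate *ᵥ C) = 0 := by
    intro t
    have h := hv t
    simp only [add_dotProduct, dotProduct_add, Matrix.mulVec_add,
      Matrix.mulVec_smul, dotProduct_smul, smul_dotProduct, smul_eq_mul] at h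
    linear_combination h
  by_cases h2 : (2 : K) = 0
  · -- characteristic 2
    have hneg : ∀ a : K, -a = a := by
      intro a
      have : (-1 : K) = 1 := by linear_combination -h2
      calc -a = (-1) * a := by ring
        _ = a := by rw [this, one_mul]
    have hdiag : ∀ i, P i i = 0 := by
      intro i
      have := hP (Pi.single i 1)
      simpa [Matrix.mulVec, dotProduct, Pi.single_apply] using this
    have hskew : ∀ i j, P i j + P j i = 0 := by
      intro i j
      by_cases hij : i = j
      · subst hij; simp [hdiag]
      have := hP (Pi.single i 1 + Pi.single j 1)
      simp only [add_dotProduct, Matrix.mulVec_add] at this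
      simp only [dotProduct_add] at this
      have hsingle : ∀ k l : Fin (n-1),
          (Pi.single k 1 : Fin (n-1) → K) ⬝ᵥ P *ᵥ (Pi.single l 1) = P k l := by
        intro k l
        simp [Matrix.mulVec, dotProduct, Pi.single_apply]
      rw [hsingle, hsingle, hsingle, hsingle, hdiag, hdiag] at this
      linear_combination this
    have hPsymm : Pᵀ = P := by
      ext i j
      rw [Matrix.transpose_apply]
      have := hskew i j
      calc P j i = -(P i j) := by linear_combination this
        _ = P i j := hneg _
    have hAsymm : P.adjugateᵀ = P.adjugate := by
      rw [Matrix.adjugate_transpose, hPsymm]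
    have hxy : C ⬝ᵥ P.adjugate *ᵥ C₀ = C₀ ⬝ᵥ P.adjugate *ᵥ C := by
      rw [Matrix.dotProduct_mulVec, ← Matrix.mulVec_transpose, hAsymm,
        dotProduct_comm]
    linear_combination hq 1 - hq 0 - hxy - (C₀ ⬝ᵥ P.adjugate *ᵥ C) * h2
  · have h2b : 2 * (C ⬝ᵥ P.adjugate *ᵥ C) = 0 := by
      linear_combination hq 1 + hq (-1) - 2 * hq 0
    exact (mul_eq_zero.mp h2b).resolve_left h2
end

section
/- Let K be a field, n ≥ 3 an integer, and r an even positive integer with r < n. Let A be an n×n alternating matrix over K, written in block form A = [[0, L, a],[−Lᵀ, B, C],[−a, −Cᵀ, 0]] with L a 1×(n-2) row, C ∈ K^{n-2}, a ∈ K, and B an (n-2)×(n-2) alternating matrix. Set N = E_{1,n} − E_{n,1}. If rank(A + t·N) ≤ r for every t ∈ K, then rank(B) ≤ r − 2. -/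
open Matrix Module

section Aux
open Module
variable {K : Type*} [Field K]

private lemma skew_of_alt {m : Type*} [Fintype m] [DecidableEq m]
    (B : Matrix m m K) (hB : ∀ X : m → K, X ⬝ᵥ B *ᵥ X = 0) (i j : m) :
    B i j = - B j i := by
  have hdiag : ∀ k, B k k = 0 := fun k => by
    have := hB (Pi.single k 1)
    simpa [Matrix.mulVec_single] using this
  have h := hB (Pi.single i 1 + Pi.single j 1)
  simp [Matrix.mulVec_add, Matrix.mulVec_single, dotProduct_add, add_dotProduct,
    hdiag] at h
  linear_combination h

private lemma even_finrank_of_alt_nondeg (k : ℕ) :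
    ∀ (V : Type*) [AddCommGroup V] [Module K V] [FiniteDimensional K V],
      finrank K V = k → ∀ B : LinearMap.BilinForm K V, B.IsAlt → B.Nondegenerate →
      Even k := by
  induction k using Nat.strong_induction_on with
  | _ k ih =>
  intro V _ _ _ hk B hAlt hN
  rcases Nat.eq_zero_or_pos k with h0 | hpos
  · exact h0 ▸ Even.zero
  have hrefl : B.IsRefl := hAlt.isRefl
  have hV : Nontrivial V := by
    rw [← Module.finrank_pos_iff (R := K)]
    omega
  obtain ⟨x, hx⟩ := exists_ne (0 : V)
  obtain ⟨y, hxy⟩ : ∃ y, B x y ≠ 0 := by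
    by_contra h
    push_neg at h
    exact hx (hN.1 x h)
  have hy : y ≠ 0 := by rintro rfl; simp at hxy
  have hli : LinearIndependent K ![x, y] := by
    rw [LinearIndependent.pair_iff]
    intro s t hst
    have h1 : B (s • x + t • y) y = 0 := by rw [hst]; simp
    simp [hAlt y] at h1
    have hs : s = 0 := h1.resolve_right hxy
    refine ⟨hs, ?_⟩
    rw [hs, zero_smul, zero_add] at hst
    exact (smul_eq_zero.mp hst).resolve_right hy
  set W : Submodule K V := Submodule.span K {x, y} with hW
  have hxW : x ∈ W := Submodule.subset_span (by simp)
  have hyW : y ∈ W := Submodule.subset_span (by simp)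
  have hW2 : finrank K W = 2 := by
    rw [hW, show ({x, y} : Set V) = Set.range ![x, y] by
      ext z; simp [Fin.exists_fin_two, or_comm]]
    rw [finrank_span_eq_card hli]
    simp
  have hresW : (B.restrict W).Nondegenerate := by
    refine (LinearMap.IsRefl.nondegenerate_iff_separatingLeft (B := B.restrict W)
      (LinearMap.IsAlt.isRefl (fun v => hAlt v))).mpr ?_
    rintro ⟨v, hv⟩ h
    obtain ⟨s, t, rfl⟩ := Submodule.mem_span_pair.mp hv
    have h1 := h ⟨y, hyW⟩
    have h2 := h ⟨x, hxW⟩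
    simp [LinearMap.BilinForm.restrict_apply] at h1 h2
    have h1' : s * B x y = 0 := by simpa [hAlt y] using h1
    have hs : s = 0 := by
      rcases mul_eq_zero.mp h1' with h | h
      · exact h
      · exact absurd h hxy
    have hByx : B y x ≠ 0 := by
      intro hc
      exact hxy (neg_eq_zero.mp (by rw [LinearMap.IsAlt.neg hAlt x y, hc]))
    have ht : t = 0 := by
      have h2' : t * B y x = 0 := by simpa [hs, hAlt x] using h2
      rcases mul_eq_zero.mp h2' with h | h
      · exact h
      · exact absurd h hByx
    ext
    simp [hs, ht]
  have hcompl : IsCompl W (B.orthogonal W) :=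
    LinearMap.BilinForm.isCompl_orthogonal_of_restrict_nondegenerate hrefl hresW
  have hk2 : 2 ≤ k := by
    have := Submodule.finrank_le W
    omega
  have hW' : finrank K (B.orthogonal W) = k - 2 := by
    rw [LinearMap.BilinForm.finrank_orthogonal hN W, hk, hW2]
  have hresW' : (B.restrict (B.orthogonal W)).Nondegenerate := by
    rw [LinearMap.BilinForm.restrict_nondegenerate_iff_isCompl_orthogonal hrefl,
      LinearMap.BilinForm.orthogonal_orthogonal hN hrefl]
    exact hcompl.symm
  have hAlt' : (B.restrict (B.orthogonal W)).IsAlt := fun v => hAlt v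
  obtain ⟨c, hc⟩ := ih (k - 2) (by omega) (B.orthogonal W) hW' _ hAlt' hresW'
  exact ⟨c + 1, by omega⟩

private lemma even_rank_of_alt {m : Type*} [Fintype m] [DecidableEq m]
    (B : Matrix m m K) (hB : ∀ X : m → K, X ⬝ᵥ B *ᵥ X = 0) : Even B.rank := by
  have hskew : ∀ i j, B i j = - B j i := skew_of_alt B hB
  set Bf : LinearMap.BilinForm K (m → K) :=
    LinearMap.mk₂ K (fun x y => x ⬝ᵥ B *ᵥ y)
      (fun x x' y => by simp [add_dotProduct])
      (fun c x y => by simp [smul_dotProduct])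
      (fun x y y' => by simp [Matrix.mulVec_add, dotProduct_add])
      (fun c x y => by simp [Matrix.mulVec_smul, dotProduct_smul]) with hBf
  obtain ⟨U, hU⟩ := Submodule.exists_isCompl (LinearMap.ker B.mulVecLin)
  have hrank : finrank K U = B.rank := by
    have h1 := LinearMap.finrank_range_add_finrank_ker B.mulVecLin
    have h2 := Submodule.finrank_add_eq_of_isCompl hU
    have h3 : B.rank = finrank K (LinearMap.range B.mulVecLin) := rfl
    omega
  have hnd : (Bf.restrict U).Nondegenerate := by
    refine (LinearMap.IsRefl.nondegenerate_iff_separatingLeft (B := Bf.restrict U)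
      (LinearMap.IsAlt.isRefl (fun v => hB v))).mpr ?_
    rintro ⟨u, hu⟩ h
    have hall : ∀ v : m → K, u ⬝ᵥ B *ᵥ v = 0 := by
      intro v
      have hv : v ∈ LinearMap.ker B.mulVecLin ⊔ U := by rw [hU.sup_eq_top]; trivial
      obtain ⟨p, hp, q, hq, rfl⟩ := Submodule.mem_sup.mp hv
      have h1 : u ⬝ᵥ B *ᵥ p = 0 := by
        rw [show B *ᵥ p = 0 from hp]
        simp
      have h2 : u ⬝ᵥ B *ᵥ q = 0 := h ⟨q, hq⟩
      rw [Matrix.mulVec_add, dotProduct_add, h1, h2, add_zero]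
    have hvm : ∀ j, (u ᵥ* B) j = 0 := by
      intro j
      have := hall (Pi.single j 1)
      rwa [Matrix.dotProduct_mulVec, dotProduct_single, mul_one] at this
    have hmv : B *ᵥ u = 0 := by
      funext i
      have : (B *ᵥ u) i = -((u ᵥ* B) i) := by
        simp only [Matrix.mulVec, Matrix.vecMul, dotProduct]
        rw [← Finset.sum_neg_distrib]
        refine Finset.sum_congr rfl fun j _ => ?_
        rw [hskew i j]; ring
      rw [this, hvm i, neg_zero, Pi.zero_apply]
    have : u ∈ LinearMap.ker B.mulVecLin ⊓ U := ⟨hmv, hu⟩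
    rw [hU.inf_eq_bot] at this
    exact Subtype.ext this
  have hAlt : (Bf.restrict U).IsAlt := fun v => hB v
  exact even_finrank_of_alt_nondeg (B.rank) U hrank (Bf.restrict U) hAlt hnd

end Aux

/-- Extraction lemma for alternating matrices: if the `n × n` alternating matrix
`A = [[0, L, a],[−Lᵀ, B, C],[−a, −Cᵀ, 0]]` satisfies `rank (A + t • (E₁ₙ − Eₙ₁)) ≤ r`
for every `t`, where `r` is even, positive and `r < n`, then `rank B ≤ r − 2`. -/
theorem stmt3 {K : Type*} [Field K] (n r : ℕ) (hn : 3 ≤ n)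
    (hr0 : 0 < r) (hre : Even r) (hrn : r < n)
    (L C : Fin (n - 2) → K) (a : K)
    (B : Matrix (Fin (n - 2)) (Fin (n - 2)) K)
    (hB : ∀ X : Fin (n - 2) → K, X ⬝ᵥ B *ᵥ X = 0)
    (hrk : ∀ t : K,
      (Matrix.fromBlocks
          (Matrix.of fun (_ _ : Unit) => (0 : K))
          (Matrix.of fun (_ : Unit) (j : Fin (n - 2) ⊕ Unit) => Sum.elim L (fun _ => a) j)
          (Matrix.of fun (i : Fin (n - 2) ⊕ Unit) (_ : Unit) =>
            Sum.elim (fun k => -L k) (fun _ => -a) i)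
          (Matrix.fromBlocks B (Matrix.of fun i (_ : Unit) => C i)
            (Matrix.of fun (_ : Unit) j => -C j) (0 : Matrix Unit Unit K))
        + t • Matrix.fromBlocks
          (Matrix.of fun (_ _ : Unit) => (0 : K))
          (Matrix.of fun (_ : Unit) (j : Fin (n - 2) ⊕ Unit) =>
            Sum.elim (fun _ => (0 : K)) (fun _ => 1) j)
          (Matrix.of fun (i : Fin (n - 2) ⊕ Unit) (_ : Unit) =>
            Sum.elim (fun _ => (0 : K)) (fun _ => -1) i)
          (0 : Matrix (Fin (n - 2) ⊕ Unit) (Fin (n - 2) ⊕ Unit) K)).rank ≤ r) :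
    B.rank ≤ r - 2 := by
  classical
  by_contra hcon
  push_neg at hcon
  -- name the matrix family
  set Mt : K → Matrix (Unit ⊕ (Fin (n - 2) ⊕ Unit)) (Unit ⊕ (Fin (n - 2) ⊕ Unit)) K :=
    fun t =>
      Matrix.fromBlocks
          (Matrix.of fun (_ _ : Unit) => (0 : K))
          (Matrix.of fun (_ : Unit) (j : Fin (n - 2) ⊕ Unit) => Sum.elim L (fun _ => a) j)
          (Matrix.of fun (i : Fin (n - 2) ⊕ Unit) (_ : Unit) =>
            Sum.elim (fun k => -L k) (fun _ => -a) i)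
          (Matrix.fromBlocks B (Matrix.of fun i (_ : Unit) => C i)
            (Matrix.of fun (_ : Unit) j => -C j) (0 : Matrix Unit Unit K))
        + t • Matrix.fromBlocks
          (Matrix.of fun (_ _ : Unit) => (0 : K))
          (Matrix.of fun (_ : Unit) (j : Fin (n - 2) ⊕ Unit) =>
            Sum.elim (fun _ => (0 : K)) (fun _ => 1) j)
          (Matrix.of fun (i : Fin (n - 2) ⊕ Unit) (_ : Unit) =>
            Sum.elim (fun _ => (0 : K)) (fun _ => -1) i)
          (0 : Matrix (Fin (n - 2) ⊕ Unit) (Fin (n - 2) ⊕ Unit) K) with hMt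
  have hrk' : ∀ t, (Mt t).rank ≤ r := hrk
  -- entry lemmas
  have hMB : ∀ (t : K) i j, Mt t (Sum.inr (Sum.inl i)) (Sum.inr (Sum.inl j)) = B i j := by
    intro t i j; simp [hMt]
  have hMC : ∀ (t : K) i, Mt t (Sum.inr (Sum.inl i)) (Sum.inr (Sum.inr ())) = C i := by
    intro t i; simp [hMt]
  have hML : ∀ (t : K) k, Mt t (Sum.inl ()) (Sum.inr (Sum.inl k)) = L k := by
    intro t k; simp [hMt]
  have hMa : ∀ (t : K), Mt t (Sum.inl ()) (Sum.inr (Sum.inr ())) = a + t := by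
    intro t; simp [hMt]
  -- the middle-rows submatrix
  set P : K → Matrix (Fin (n - 2)) (Unit ⊕ (Fin (n - 2) ⊕ Unit)) K :=
    fun t => (Mt t).submatrix (Sum.inr ∘ Sum.inl) id with hP
  -- rank P t ≤ r
  have hPrank : ∀ t, (P t).rank ≤ r := by
    intro t
    have hcomp : (P t).mulVecLin
        = (LinearMap.funLeft K K (Sum.inr ∘ Sum.inl)).comp (Mt t).mulVecLin := by
      ext x i
      rfl
    have : (P t).rank = finrank K (Submodule.map (LinearMap.funLeft K K (Sum.inr ∘ Sum.inl))
        (LinearMap.range (Mt t).mulVecLin)) := by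
      rw [Matrix.rank, hcomp, LinearMap.range_comp]
    rw [this]
    exact le_trans (Submodule.finrank_map_le _ _) (hrk' t)
  -- column space of B is contained in that of P t
  have hBP : ∀ t, LinearMap.range B.mulVecLin ≤ LinearMap.range (P t).mulVecLin := by
    rintro t _ ⟨x, rfl⟩
    refine ⟨Sum.elim (fun _ => 0) (Sum.elim x fun _ => 0), ?_⟩
    show (P t) *ᵥ _ = B *ᵥ x
    funext i
    simp [Matrix.mulVec, dotProduct, Fintype.sum_sum_type, hP, hMB]
  have hBr : B.rank ≤ r := by
    have := Submodule.finrank_mono (hBP 0)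
    exact le_trans this (hPrank 0)
  have hBrank : B.rank = r := by
    obtain ⟨b, hb⟩ := even_rank_of_alt B hB
    obtain ⟨s, hs⟩ := hre
    omega
  -- column space equality
  have hPeq : ∀ t, LinearMap.range (P t).mulVecLin = LinearMap.range B.mulVecLin := by
    intro t
    refine (Submodule.eq_of_le_of_finrank_le (hBP t) ?_).symm
    exact le_trans (hPrank t) (le_of_eq hBrank.symm)
  have hPr : ∀ t, (P t).rank = r := by
    intro t
    rw [Matrix.rank, hPeq t]
    exact hBrank
  -- C is in the column space of B
  obtain ⟨v, hv⟩ : ∃ v, B *ᵥ v = C := by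
    have memP : C ∈ LinearMap.range (P 0).mulVecLin := by
      refine ⟨Pi.single (Sum.inr (Sum.inr ())) 1, ?_⟩
      show (P 0) *ᵥ _ = C
      funext i
      simp only [Matrix.mulVec_single_one, Matrix.col_apply, mul_one]
      exact hMC 0 i
    rw [hPeq 0] at memP
    exact memP
  -- the first row is a combination of the middle rows
  have hw : ∀ t : K, ∃ w, ∀ j, ((P t)ᵀ *ᵥ w) j = Mt t (Sum.inl ()) j := by
    intro t
    have hle : LinearMap.range ((P t)ᵀ).mulVecLin ≤ LinearMap.range ((Mt t)ᵀ).mulVecLin := by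
      rintro _ ⟨w, rfl⟩
      refine ⟨Sum.elim (fun _ => 0) (Sum.elim w fun _ => 0), ?_⟩
      show (Mt t)ᵀ *ᵥ _ = (P t)ᵀ *ᵥ w
      funext j
      simp [Matrix.mulVec, dotProduct, Fintype.sum_sum_type, hP,
        Matrix.transpose_apply]
    have h2 : ((P t)ᵀ).rank = r := by rw [Matrix.rank_transpose]; exact hPr t
    have heq := Submodule.eq_of_le_of_finrank_le hle
      (by
        show finrank K (LinearMap.range ((Mt t)ᵀ).mulVecLin) ≤ _
        have h1 : ((Mt t)ᵀ).rank ≤ r := by rw [Matrix.rank_transpose]; exact hrk' t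
        have h2' : finrank K (LinearMap.range ((P t)ᵀ).mulVecLin) = r := h2
        rw [h2']
        exact h1)
    have hmem : (fun j => Mt t (Sum.inl ()) j) ∈ LinearMap.range ((Mt t)ᵀ).mulVecLin := by
      refine ⟨Pi.single (Sum.inl ()) 1, ?_⟩
      show (Mt t)ᵀ *ᵥ _ = _
      funext j
      simp only [Matrix.mulVec_single_one, Matrix.col_apply, mul_one, Matrix.transpose_apply]
    rw [← heq] at hmem
    obtain ⟨w, hw⟩ := hmem
    exact ⟨w, fun j => congrFun hw j⟩
  -- key identity
  have key : ∀ t : K, a + t = L ⬝ᵥ v := by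
    intro t
    obtain ⟨w, hwj⟩ := hw t
    have hL : w ᵥ* B = L := by
      funext k
      have h := hwj (Sum.inr (Sum.inl k))
      rw [hML] at h
      rw [← h]
      simp [Matrix.mulVec, Matrix.vecMul, dotProduct, hP, hMB, mul_comm]
    have hCw : w ⬝ᵥ C = a + t := by
      have h := hwj (Sum.inr (Sum.inr ()))
      rw [hMa] at h
      rw [← h]
      simp [Matrix.mulVec, dotProduct, hP, hMC, mul_comm]
    calc a + t = w ⬝ᵥ C := hCw.symm
      _ = w ⬝ᵥ (B *ᵥ v) := by rw [hv]
      _ = (w ᵥ* B) ⬝ᵥ v := Matrix.dotProduct_mulVec _ _ _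
      _ = L ⬝ᵥ v := by rw [hL]
  have h0 := key 0
  have h1 := key 1
  rw [add_zero] at h0
  rw [h0] at h1
  exact one_ne_zero (by linear_combination h1)
end

section
/- Let K be a field, n ≥ 3 an integer, and r a positive integer with r < n. Let A be an n×n symmetric matrix over K, written in block form A = [[a, L, b],[Lᵀ, B, C],[b, Cᵀ, c]] with L a 1×(n-2) row, C ∈ K^{n-2}, a, b, c ∈ K, and B an (n-2)×(n-2) symmetric matrix. Let d ∈ K and set N to be the symmetric matrix with entry 1 at positions (1,n) and (n,1), entry d at position (n,n), and all other entries zero. Assume rank(A + t·N) ≤ r for every t ∈ K. If K has more than 2 elements or d = 0, then rank(B) ≤ r − 2. -/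
open Matrix

lemma exists_congr_unit {K : Type*} [Field K] {m : ℕ} (B : Matrix (Fin m) (Fin m) K)
    (hB : B.IsSymm) : ∃ P : Matrix (Fin m) (Fin B.rank) K, IsUnit (Pᵀ * B * P) := by
  classical
  obtain ⟨U, hU⟩ := Submodule.exists_isCompl (LinearMap.ker B.mulVecLin)
  have hdim : Module.finrank K U = B.rank := by
    have h1 := LinearMap.finrank_range_add_finrank_ker B.mulVecLin
    have h2 := Submodule.finrank_add_eq_of_isCompl hU
    have h3 : Module.finrank K (Fin m → K) = m := Module.finrank_fin_fun K
    have h4 : B.rank = Module.finrank K (LinearMap.range B.mulVecLin) := rfl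
    omega
  let u : Module.Basis (Fin B.rank) K U := (Module.finBasis K U).reindex (finCongr hdim)
  refine ⟨Matrix.of fun i k => (u k : Fin m → K) i, ?_⟩
  set P : Matrix (Fin m) (Fin B.rank) K := Matrix.of fun i k => (u k : Fin m → K) i with hPdef
  rw [← Matrix.mulVec_injective_iff_isUnit]
  have key : ∀ z : Fin B.rank → K, (Pᵀ * B * P).mulVec z = 0 → z = 0 := by
    intro z hz
    have hv : P.mulVec z = ∑ k, z k • (u k : Fin m → K) := by
      funext i
      simp [hPdef, Matrix.mulVec, dotProduct, Finset.sum_apply, mul_comm]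
    have hvU : P.mulVec z ∈ U := by
      rw [hv]; exact Submodule.sum_mem _ fun k _ => Submodule.smul_mem _ _ (u k).2
    set w : Fin m → K := B.mulVec (P.mulVec z) with hwdef
    have hPw : Pᵀ.mulVec w = 0 := by
      rw [hwdef, Matrix.mulVec_mulVec, Matrix.mulVec_mulVec]
      exact hz
    have hUdot : ∀ k, (u k : Fin m → K) ⬝ᵥ w = 0 := by
      intro k
      have := congrFun hPw k
      simpa [hPdef, Matrix.mulVec, dotProduct] using this
    have hUall : ∀ y ∈ U, y ⬝ᵥ w = 0 := by
      intro y hy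
      have hrepr : (⟨y, hy⟩ : U) = ∑ k, u.repr ⟨y, hy⟩ k • u k := (u.sum_repr _).symm
      have : y = ∑ k, u.repr ⟨y, hy⟩ k • (u k : Fin m → K) := by
        have := congrArg (Subtype.val) hrepr
        simpa only [Submodule.coe_sum, Submodule.coe_smul] using this
      rw [this]
      have hlin : (∑ k, u.repr ⟨y, hy⟩ k • (u k : Fin m → K)) ⬝ᵥ w
          = ∑ k, u.repr ⟨y, hy⟩ k * ((u k : Fin m → K) ⬝ᵥ w) := by
        simp only [dotProduct, Finset.sum_apply, Pi.smul_apply, smul_eq_mul,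
          Finset.sum_mul, Finset.mul_sum, mul_assoc]
        exact Finset.sum_comm
      rw [hlin]
      simp [hUdot]
    have hKall : ∀ y ∈ LinearMap.ker B.mulVecLin, y ⬝ᵥ w = 0 := by
      intro y hy
      have hy' : B.mulVec y = 0 := hy
      rw [hwdef, dotProduct_mulVec]
      have : y ᵥ* B = 0 := by
        have : Bᵀ.mulVec y = 0 := by rw [hB.eq]; exact hy'
        rw [← Matrix.mulVec_transpose]; exact this
      rw [this, zero_dotProduct]
    have hw : w = 0 := by
      funext i
      have h_all : ∀ y : Fin m → K, y ⬝ᵥ w = 0 := by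
        intro y
        have hy : y ∈ (LinearMap.ker B.mulVecLin) ⊔ U := by
          rw [hU.codisjoint.eq_top]; trivial
        obtain ⟨y1, hy1, y2, hy2, rfl⟩ := Submodule.mem_sup.mp hy
        rw [add_dotProduct, hKall y1 hy1, hUall y2 hy2, add_zero]
      have := h_all (Pi.single i 1)
      simpa [single_dotProduct] using this
    have hvK : P.mulVec z ∈ LinearMap.ker B.mulVecLin := by
      exact hw
    have hv0 : P.mulVec z = 0 :=
      (Submodule.disjoint_def.mp hU.disjoint) _ hvK hvU
    have hli : LinearIndependent K (fun k => (u k : Fin m → K)) :=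
      u.linearIndependent.map' U.subtype U.ker_subtype
    have := Fintype.linearIndependent_iff.mp hli z (by rw [← hv]; exact hv0)
    funext k; exact this k
  intro x y hxy
  have : (Pᵀ * B * P).mulVec (x - y) = 0 := by
    rw [Matrix.mulVec_sub, hxy, sub_self]
  have := key _ this
  exact sub_eq_zero.mp this

private def e2 : Fin 2 ≃ Unit ⊕ Unit where
  toFun := ![Sum.inl (), Sum.inr ()]
  invFun := Sum.elim (fun _ => 0) (fun _ => 1)
  left_inv := by decide
  right_inv := by rintro (⟨⟩ | ⟨⟩) <;> rfl

lemma det_two {K : Type*} [CommRing K] (S : Matrix (Unit ⊕ Unit) (Unit ⊕ Unit) K) :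
    S.det = S (.inl ()) (.inl ()) * S (.inr ()) (.inr ())
      - S (.inl ()) (.inr ()) * S (.inr ()) (.inl ()) := by
  rw [← Matrix.det_submatrix_equiv_self e2 S, Matrix.det_fin_two]
  rfl

lemma exists_good_t {K : Type*} [Field K] (a' b' c' d : K)
    (hcase : (∃ x y z : K, x ≠ y ∧ x ≠ z ∧ y ≠ z) ∨ d = 0) :
    ∃ t : K, a' * (c' + t * d) - (b' + t) ^ 2 ≠ 0 := by
  by_contra h
  push_neg at h
  rcases hcase with ⟨x, y, z, hxy, hxz, hyz⟩ | rfl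
  · have hx := h x; have hy := h y; have hz := h z
    have e1 : (x - y) * (a' * d - 2 * b' - x - y) = 0 := by linear_combination hx - hy
    have e2 : (x - z) * (a' * d - 2 * b' - x - z) = 0 := by linear_combination hx - hz
    have f1 : a' * d - 2 * b' - x - y = 0 :=
      (mul_eq_zero.mp e1).resolve_left (sub_ne_zero.mpr hxy)
    have f2 : a' * d - 2 * b' - x - z = 0 :=
      (mul_eq_zero.mp e2).resolve_left (sub_ne_zero.mpr hxz)
    exact hyz (by linear_combination f2 - f1)
  · have h0 := h 0; have h1 := h 1; have hm := h (-1)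
    have e1 : 2 * b' + 1 = 0 := by linear_combination h0 - h1
    have e2 : -(2 * b') + 1 = 0 := by linear_combination h0 - hm
    have h2 : (2 : K) = 0 := by linear_combination e1 + e2
    exact one_ne_zero (by linear_combination e1 - b' * h2 : (1 : K) = 0)


/-- Extraction lemma for symmetric matrices: if the `n × n` symmetric matrix
`A = [[a, L, b],[Lᵀ, B, C],[b, Cᵀ, c]]` satisfies `rank (A + t • N) ≤ r` for every `t`,
where `N` has entry `1` at positions `(1,n)` and `(n,1)`, entry `d` at `(n,n)` and zeroes
elsewhere, and if moreover `K` has more than two elements or `d = 0`,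
then `rank B ≤ r − 2`. -/
theorem stmt4 {K : Type*} [Field K] (n r : ℕ) (hn : 3 ≤ n)
    (hr0 : 0 < r) (hrn : r < n)
    (L C : Fin (n - 2) → K) (a b c d : K)
    (B : Matrix (Fin (n - 2)) (Fin (n - 2)) K) (hB : B.IsSymm)
    (hrk : ∀ t : K,
      (Matrix.fromBlocks
          (Matrix.of fun (_ _ : Unit) => a)
          (Matrix.of fun (_ : Unit) (j : Fin (n - 2) ⊕ Unit) => Sum.elim L (fun _ => b) j)
          (Matrix.of fun (i : Fin (n - 2) ⊕ Unit) (_ : Unit) => Sum.elim L (fun _ => b) i)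
          (Matrix.fromBlocks B (Matrix.of fun i (_ : Unit) => C i)
            (Matrix.of fun (_ : Unit) j => C j) (Matrix.of fun (_ _ : Unit) => c))
        + t • Matrix.fromBlocks
          (Matrix.of fun (_ _ : Unit) => (0 : K))
          (Matrix.of fun (_ : Unit) (j : Fin (n - 2) ⊕ Unit) =>
            Sum.elim (fun _ => (0 : K)) (fun _ => 1) j)
          (Matrix.of fun (i : Fin (n - 2) ⊕ Unit) (_ : Unit) =>
            Sum.elim (fun _ => (0 : K)) (fun _ => 1) i)
          (Matrix.fromBlocks (0 : Matrix (Fin (n - 2)) (Fin (n - 2)) K) 0 0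
            (Matrix.of fun (_ _ : Unit) => d))).rank ≤ r)
    (hcase : (∃ x y z : K, x ≠ y ∧ x ≠ z ∧ y ≠ z) ∨ d = 0) :
    B.rank ≤ r - 2 := by
  classical
  obtain ⟨P, hP⟩ := exists_congr_unit B hB
  set B₀ : Matrix (Fin B.rank) (Fin B.rank) K := Pᵀ * B * P with hB₀
  have hPu : IsUnit B₀ := by rw [hB₀]; exact hP
  have hB₀sym : B₀ᵀ = B₀ := by
    rw [hB₀, Matrix.transpose_mul, Matrix.transpose_mul, Matrix.transpose_transpose, hB.eq,
      ← Matrix.mul_assoc]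
  haveI iB : Invertible B₀ := hPu.invertible
  set E : Matrix (Fin B.rank) (Unit ⊕ Unit) K :=
    Matrix.of fun k j => Sum.elim (fun _ => (Pᵀ *ᵥ L) k) (fun _ => (Pᵀ *ᵥ C) k) j with hE
  set G : Matrix (Unit ⊕ Unit) (Unit ⊕ Unit) K := Eᵀ * B₀⁻¹ * E with hG
  have hGsym : G (.inr ()) (.inl ()) = G (.inl ()) (.inr ()) := by
    have : Gᵀ = G := by
      rw [hG, Matrix.transpose_mul, Matrix.transpose_mul, Matrix.transpose_transpose,
        Matrix.transpose_nonsing_inv, hB₀sym, ← Matrix.mul_assoc]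
    conv_lhs => rw [← this]
    rfl
  obtain ⟨t, ht⟩ := exists_good_t (a - G (.inl ()) (.inl ())) (b - G (.inl ()) (.inr ()))
    (c - G (.inr ()) (.inr ())) d hcase
  set F : Matrix (Unit ⊕ Unit) (Unit ⊕ Unit) K :=
    Matrix.of fun i j => Sum.elim
      (fun _ => Sum.elim (fun _ => a) (fun _ => b + t) j)
      (fun _ => Sum.elim (fun _ => b + t) (fun _ => c + t * d) j) i with hF
  set M : Matrix (Unit ⊕ (Fin (n - 2) ⊕ Unit)) (Unit ⊕ (Fin (n - 2) ⊕ Unit)) K :=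
      Matrix.fromBlocks
          (Matrix.of fun (_ _ : Unit) => a)
          (Matrix.of fun (_ : Unit) (j : Fin (n - 2) ⊕ Unit) => Sum.elim L (fun _ => b) j)
          (Matrix.of fun (i : Fin (n - 2) ⊕ Unit) (_ : Unit) => Sum.elim L (fun _ => b) i)
          (Matrix.fromBlocks B (Matrix.of fun i (_ : Unit) => C i)
            (Matrix.of fun (_ : Unit) j => C j) (Matrix.of fun (_ _ : Unit) => c))
        + t • Matrix.fromBlocks
          (Matrix.of fun (_ _ : Unit) => (0 : K))
          (Matrix.of fun (_ : Unit) (j : Fin (n - 2) ⊕ Unit) =>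
            Sum.elim (fun _ => (0 : K)) (fun _ => 1) j)
          (Matrix.of fun (i : Fin (n - 2) ⊕ Unit) (_ : Unit) =>
            Sum.elim (fun _ => (0 : K)) (fun _ => 1) i)
          (Matrix.fromBlocks (0 : Matrix (Fin (n - 2)) (Fin (n - 2)) K) 0 0
            (Matrix.of fun (_ _ : Unit) => d)) with hM
  set X : Matrix (Fin B.rank ⊕ (Unit ⊕ Unit)) (Unit ⊕ (Fin (n - 2) ⊕ Unit)) K :=
    Matrix.of fun s j =>
      Sum.elim (fun k => Sum.elim (fun _ => 0) (Sum.elim (fun i => P i k) (fun _ => 0)) j)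
        (fun s2 => Sum.elim (fun _ => Sum.elim (fun _ => (1 : K)) (fun _ => 0) s2)
          (Sum.elim (fun _ => 0) (fun _ => Sum.elim (fun _ => (0 : K)) (fun _ => 1) s2)) j) s
    with hX
  have hprod : X * M * Xᵀ = Matrix.fromBlocks B₀ E Eᵀ F := by
    ext i j
    rcases i with k | (⟨⟩ | ⟨⟩) <;> rcases j with k' | (⟨⟩ | ⟨⟩) <;>
      simp [hX, hM, hE, hF, hB₀, Matrix.mul_apply, Fintype.sum_sum_type,
        Matrix.mulVec, dotProduct, Finset.sum_mul, Finset.mul_sum, mul_comm,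
        mul_assoc, mul_left_comm]
  have hdet : (Matrix.fromBlocks B₀ E Eᵀ F).det ≠ 0 := by
    rw [Matrix.det_fromBlocks₁₁]
    refine mul_ne_zero (((Matrix.isUnit_iff_isUnit_det B₀).mp hPu).ne_zero) ?_
    rw [Matrix.invOf_eq_nonsing_inv, det_two]
    simp only [Matrix.sub_apply, ← hG]
    rw [hGsym]
    have h11 : F (.inl ()) (.inl ()) = a := rfl
    have h12 : F (.inl ()) (.inr ()) = b + t := rfl
    have h21 : F (.inr ()) (.inl ()) = b + t := rfl
    have h22 : F (.inr ()) (.inr ()) = c + t * d := rfl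
    rw [h11, h12, h21, h22]
    intro hc
    exact ht (by linear_combination hc)
  have hunit : IsUnit (Matrix.fromBlocks B₀ E Eᵀ F) :=
    (Matrix.isUnit_iff_isUnit_det _).mpr (isUnit_iff_ne_zero.mpr hdet)
  have hrank2 : (Matrix.fromBlocks B₀ E Eᵀ F).rank = B.rank + 2 := by
    rw [Matrix.rank_of_isUnit _ hunit]
    simp
  have hle : B.rank + 2 ≤ r := by
    calc B.rank + 2 = (X * M * Xᵀ).rank := by rw [hprod, hrank2]
      _ ≤ (X * M).rank := Matrix.rank_mul_le_left _ _
      _ ≤ M.rank := Matrix.rank_mul_le_right _ _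
      _ ≤ r := hrk t
  omega
end

section
/- Let K be a field, n ≥ 2 an integer, and r a positive integer with r < n. Let A be an n×n symmetric matrix over K, written in block form A = [[P, C],[Cᵀ, a]] with P an (n-1)×(n-1) symmetric matrix, C ∈ K^{n-1} and a ∈ K. If rank(A + t·E_{n,n}) ≤ r for every t ∈ K, then rank(P) ≤ r − 1. -/
open Matrix

/-- If the `n × n` symmetric matrix `A = [[P, C],[Cᵀ, a]]` satisfies
`rank (A + t • Eₙₙ) ≤ r` for every `t`, then `rank P ≤ r − 1`. -/
theorem stmt5 {K : Type*} [Field K] (n r : ℕ) (hn : 2 ≤ n)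
    (hr0 : 0 < r) (hrn : r < n)
    (P : Matrix (Fin (n - 1)) (Fin (n - 1)) K) (hP : P.IsSymm)
    (C : Fin (n - 1) → K) (a : K)
    (hrk : ∀ t : K,
      (Matrix.fromBlocks P (Matrix.of fun i (_ : Unit) => C i)
          (Matrix.of fun (_ : Unit) j => C j) (Matrix.of fun (_ _ : Unit) => a)
        + t • Matrix.fromBlocks (0 : Matrix (Fin (n - 1)) (Fin (n - 1)) K) 0 0
          (Matrix.of fun (_ _ : Unit) => (1 : K))).rank ≤ r) :
    P.rank ≤ r - 1 := by
  classical
  set Mt : K → Matrix (Fin (n-1) ⊕ Unit) (Fin (n-1) ⊕ Unit) K :=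
    fun t => Matrix.fromBlocks P (Matrix.of fun i _ => C i) (Matrix.of fun _ j => C j)
      (Matrix.of fun _ _ => a + t) with hM
  have hrk' : ∀ t, (Mt t).rank ≤ r := by
    intro t
    have h := hrk t
    have heq : (Matrix.fromBlocks P (Matrix.of fun i (_ : Unit) => C i)
          (Matrix.of fun (_ : Unit) j => C j) (Matrix.of fun (_ _ : Unit) => a)
        + t • Matrix.fromBlocks (0 : Matrix (Fin (n - 1)) (Fin (n - 1)) K) 0 0
          (Matrix.of fun (_ _ : Unit) => (1 : K))) = Mt t := by
      ext (i|i) (j|j) <;> simp [hM, Matrix.add_apply, Matrix.smul_apply, smul_eq_mul]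
    rwa [heq] at h
  set N : Matrix (Fin (n-1) ⊕ Unit) (Fin (n-1)) K := (Mt 0).submatrix id Sum.inl with hN
  set W : Submodule K ((Fin (n-1) ⊕ Unit) → K) := LinearMap.range N.mulVecLin with hW
  have hWle : ∀ t, W ≤ LinearMap.range (Mt t).mulVecLin := by
    intro t
    rintro _ ⟨x, rfl⟩
    refine ⟨Sum.elim x 0, ?_⟩
    funext i
    cases i <;>
      simp [hM, hN, Matrix.mulVecLin_apply, Matrix.mulVec, dotProduct,
        Fintype.sum_sum_type]
  -- the padding map
  set pad : (Fin (n-1) → K) →ₗ[K] ((Fin (n-1) ⊕ Unit) → K) :=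
    { toFun := fun x => Sum.elim x 0
      map_add' := by intro x y; funext i; cases i <;> simp
      map_smul' := by intro c x; funext i; cases i <;> simp } with hpad
  have hpadinj : Function.Injective pad := by
    intro x y h
    funext i
    have := congrFun h (Sum.inl i)
    simpa [hpad] using this
  -- rank P ≤ finrank W
  have hPW : P.rank ≤ Module.finrank K W := by
    have hcomp : P.mulVecLin = (LinearMap.funLeft K K Sum.inl).comp N.mulVecLin := by
      refine LinearMap.ext fun x => funext fun i => ?_
      simp [hN, hM, Matrix.mulVecLin_apply, Matrix.mulVec, dotProduct]
    have : LinearMap.range P.mulVecLin = Submodule.map (LinearMap.funLeft K K Sum.inl) W := by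
      rw [hcomp, LinearMap.range_comp]
    rw [Matrix.rank, this]
    exact Submodule.finrank_map_le _ _
  by_contra hcon
  push_neg at hcon
  have hrP : r ≤ P.rank := by omega
  have hWfin : Module.finrank K W ≤ r := by
    have := Submodule.finrank_mono (hWle 0)
    calc Module.finrank K W ≤ Module.finrank K (LinearMap.range (Mt 0).mulVecLin) := this
      _ = (Mt 0).rank := rfl
      _ ≤ r := hrk' 0
  have hWr : Module.finrank K W = r := le_antisymm hWfin (le_trans hrP hPW)
  have hWeq : ∀ t, W = LinearMap.range (Mt t).mulVecLin := by
    intro t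
    refine Submodule.eq_of_le_of_finrank_le (hWle t) ?_
    rw [hWr]
    exact hrk' t
  set e : (Fin (n-1) ⊕ Unit) → K := Sum.elim 0 (fun _ => 1) with he_def
  have he : e ∈ W := by
    set u : (Fin (n-1) ⊕ Unit) → K := Sum.elim 0 (fun _ => 1) with hu
    have h1 : (Mt 1).mulVecLin u ∈ W := by rw [hWeq 1]; exact ⟨u, rfl⟩
    have h0 : (Mt 0).mulVecLin u ∈ W := by rw [hWeq 0]; exact ⟨u, rfl⟩
    have heq : e = (Mt 1).mulVecLin u - (Mt 0).mulVecLin u := by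
      funext i
      cases i <;>
        simp [he_def, hu, hM, Matrix.mulVecLin_apply, Matrix.mulVec, dotProduct,
          Fintype.sum_sum_type]
    rw [heq]
    exact sub_mem h1 h0
  -- map pad (range P) ≤ W
  have hpadW : Submodule.map pad (LinearMap.range P.mulVecLin) ≤ W := by
    rintro _ ⟨_, ⟨y, rfl⟩, rfl⟩
    have hNy : N.mulVecLin y ∈ W := ⟨y, rfl⟩
    have heq : pad (P.mulVecLin y) = N.mulVecLin y - (∑ j, C j * y j) • e := by
      funext i
      cases i <;>
        simp [hpad, he_def, hN, hM, Matrix.mulVecLin_apply, Matrix.mulVec, dotProduct,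
          mul_comm]
    rw [heq]
    exact sub_mem hNy (Submodule.smul_mem _ _ he)
  have heW : (Submodule.span K {e} : Submodule K _) ≤ W := by
    rw [Submodule.span_le, Set.singleton_subset_iff]
    exact he
  have hsup : Submodule.map pad (LinearMap.range P.mulVecLin) ⊔ Submodule.span K {e} ≤ W :=
    sup_le hpadW heW
  have hinf : Submodule.map pad (LinearMap.range P.mulVecLin) ⊓ Submodule.span K {e} = ⊥ := by
    rw [Submodule.eq_bot_iff]
    intro x hx
    rw [Submodule.mem_inf] at hx
    obtain ⟨hxA, hxB⟩ := hx
    rw [Submodule.mem_span_singleton] at hxB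
    obtain ⟨c, rfl⟩ := hxB
    obtain ⟨y, _, hy⟩ := hxA
    have := congrFun hy (Sum.inr ())
    simp [hpad, he_def] at this
    simp [this, he_def]
  have hene : e ≠ 0 := by
    intro h
    have := congrFun h (Sum.inr ())
    simp [he_def] at this
  have hdim : P.rank + 1 ≤ Module.finrank K W := by
    have h1 : Module.finrank K (Submodule.map pad (LinearMap.range P.mulVecLin)) = P.rank := by
      rw [Matrix.rank]
      exact (LinearEquiv.finrank_eq
        (Submodule.equivMapOfInjective pad hpadinj (LinearMap.range P.mulVecLin))).symm
    have h2 : Module.finrank K (Submodule.span K {e} : Submodule K _) = 1 :=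
      finrank_span_singleton hene
    have h3 := Submodule.finrank_sup_add_finrank_inf_eq
      (Submodule.map pad (LinearMap.range P.mulVecLin)) (Submodule.span K {e})
    rw [hinf, h1, h2] at h3
    simp at h3
    calc P.rank + 1 = Module.finrank K
          ↥(Submodule.map pad (LinearMap.range P.mulVecLin) ⊔ Submodule.span K {e}) := h3.symm
      _ ≤ Module.finrank K ↥W := Submodule.finrank_mono hsup
  omega
end

section
/- Let K be a field, n ≥ 3 an integer, r ≥ 2 an integer, and (i,j) ∈ {1,…,n}² with i ≠ j. Let M be an n×n symmetric matrix over K such that rank(M + t·(E_{i,j} + E_{j,i})) ≤ r for every t ∈ K. Then the (n-2)×(n-2) submatrix M_{i,j} of M obtained by deleting the i-th and j-th rows and the i-th and j-th columns of M satisfies rank(M_{i,j}) ≤ r − 2. -/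
lemma aux_poly {K : Type*} [Field K] (a b c : K) : ∃ t : K, a * c - (b + t) * (b + t) ≠ 0 := by
  by_contra h
  push_neg at h
  simp only [sub_eq_zero] at h
  have h0 := h 0
  have h1 := h 1
  have hm := h (-1)
  have : (1 : K) = 0 := by linear_combination h0 - h1 + b * (h1 + hm - 2 * h0)
  exact one_ne_zero this
open Matrix

lemma aux_principal {K : Type*} [Field K] {I : Type*} [Fintype I] [DecidableEq I]
    (N : Matrix I I K) (hN : N.IsSymm) :
    ∃ (m : ℕ) (k : Fin m → I), Function.Injective k ∧
      IsUnit (N.submatrix k k) ∧ N.rank ≤ m := by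
  classical
  obtain ⟨b, hb_sub, hb_span, hb_ind⟩ := exists_linearIndependent K (Set.range (fun x => N x))
  have hbfin : b.Finite := (Set.finite_range _).subset hb_sub
  letI : Fintype b := hbfin.fintype
  choose k hk using fun v : b => hb_sub v.2
  have hkinj : Function.Injective k := by
    intro v w hvw
    apply Subtype.ext
    rw [← hk v, ← hk w, hvw]
  -- every row of N lies in span of b
  have hrow_mem : ∀ l : I, N l ∈ Submodule.span K b := by
    intro l
    rw [hb_span]
    exact Submodule.subset_span ⟨l, rfl⟩
  -- key independence
  have key : LinearIndependent K (fun v : b => fun w : b => N (k v) (k w)) := by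
    rw [Fintype.linearIndependent_iff]
    intro g hg
    have hg' : ∀ w : b, (∑ v : b, g v * N (k v) (k w)) = 0 := by
      intro w
      have := congr_fun hg w
      simpa using this
    -- u := ∑ g v • v  vanishes
    have hu : (∑ v : b, g v • (v : I → K)) = 0 := by
      funext l
      obtain ⟨d, hd⟩ := (Submodule.mem_span_range_iff_exists_fun K).1
        (by rw [Subtype.range_coe]; exact hrow_mem l :
          N l ∈ Submodule.span K (Set.range ((↑) : b → I → K)))
      have hvl : ∀ v : b, (v : I → K) l = N (k v) l := fun v => (congrFun (hk v) l).symm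
      have hNl : ∀ v : b, N (k v) l = N l (k v) := fun v => (hN.apply l (k v)).symm ▸ rfl
      have hwv : ∀ (w v : b), (w : I → K) (k v) = N (k v) (k w) := fun w v => by
        rw [← congrFun (hk w) (k v)]
        exact hN.apply (k v) (k w)
      calc (∑ v : b, g v • (v : I → K)) l
          = ∑ v : b, g v * N l (k v) := by
            simp only [Finset.sum_apply, Pi.smul_apply, smul_eq_mul]
            exact Finset.sum_congr rfl fun v _ => by rw [hvl v, hNl v]
        _ = ∑ v : b, g v * (∑ w : b, d w • (w : I → K)) (k v) := by
            exact Finset.sum_congr rfl fun v _ => by rw [hd]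
        _ = ∑ w : b, d w * (∑ v : b, g v * N (k v) (k w)) := by
            simp only [Finset.sum_apply, Pi.smul_apply, smul_eq_mul, Finset.mul_sum]
            rw [Finset.sum_comm]
            refine Finset.sum_congr rfl fun w _ => Finset.sum_congr rfl fun v _ => by
              rw [hwv w v]; ring
        _ = 0 := by simp [hg']
    exact Fintype.linearIndependent_iff.1 hb_ind g hu
  have hunit : IsUnit (N.submatrix k k) := by
    rw [← linearIndependent_rows_iff_isUnit]
    exact key
  have hcard : N.rank = Fintype.card b := by
    rw [N.rank_eq_finrank_span_row]
    show Module.finrank K (Submodule.span K (Set.range fun x => N x)) = _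
    rw [← hb_span, ← finrank_span_eq_card hb_ind, Subtype.range_coe]
  refine ⟨Fintype.card b, k ∘ (Fintype.equivFin b).symm, hkinj.comp (Equiv.injective _), ?_, le_of_eq hcard⟩
  have : N.submatrix (k ∘ (Fintype.equivFin b).symm) (k ∘ (Fintype.equivFin b).symm)
      = (N.submatrix k k).submatrix (Fintype.equivFin b).symm (Fintype.equivFin b).symm := rfl
  rw [this, Matrix.isUnit_iff_isUnit_det, det_submatrix_equiv_self]
  exact (Matrix.isUnit_iff_isUnit_det _).1 hunit


/-- If `M` is an `n × n` symmetric matrix such that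
`rank (M + t • (E i j + E j i)) ≤ r` for every `t` (where `i ≠ j`), then the submatrix
of `M` obtained by deleting the `i`-th and `j`-th rows and columns has rank at most
`r − 2`. -/
theorem stmt6 {K : Type*} [Field K] (n r : ℕ) (hn : 3 ≤ n) (hr : 2 ≤ r)
    (i j : Fin n) (hij : i ≠ j)
    (M : Matrix (Fin n) (Fin n) K) (hM : M.IsSymm)
    (hrk : ∀ t : K,
      (M + t • (Matrix.single i j (1 : K) +
        Matrix.single j i (1 : K))).rank ≤ r) :
    (M.submatrix (fun k : {k : Fin n // k ≠ i ∧ k ≠ j} => (k : Fin n))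
      (fun k : {k : Fin n // k ≠ i ∧ k ≠ j} => (k : Fin n))).rank ≤ r - 2 := by
  classical
  by_contra hcon
  push_neg at hcon
  set N : Matrix {k : Fin n // k ≠ i ∧ k ≠ j} {k : Fin n // k ≠ i ∧ k ≠ j} K :=
    M.submatrix (fun k => (k : Fin n)) (fun k => (k : Fin n)) with hNdef
  have hge : r - 1 ≤ N.rank := by omega
  have hNsymm : N.IsSymm := hM.submatrix _
  obtain ⟨m, k, hkinj, hunit, hrank⟩ := aux_principal N hNsymm
  have hm : r - 1 ≤ m := le_trans hge hrank
  -- the big index map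
  set ρ : Fin 2 ⊕ Fin m → Fin n := Sum.elim ![i, j] (fun v => ((k v) : Fin n)) with hρdef
  have hDunit : IsUnit (N.submatrix k k).det := (Matrix.isUnit_iff_isUnit_det _).1 hunit
  letI : Invertible (N.submatrix k k) := (N.submatrix k k).invertibleOfIsUnitDet hDunit
  set Dm := N.submatrix k k with hDm
  set Bm : Matrix (Fin 2) (Fin m) K := Matrix.of (fun p v => M (![i, j] p) (k v)) with hBm
  set Cm : Matrix (Fin m) (Fin 2) K := Matrix.of (fun v p => M (k v) (![i, j] p)) with hCm
  set X := Bm * ⅟Dm * Cm with hX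
  have hDmsymm : Dmᵀ = Dm := (hNsymm.submatrix k).eq
  have hinvsymm : (⅟Dm)ᵀ = ⅟Dm := by
    rw [Matrix.invOf_eq_nonsing_inv, Matrix.transpose_nonsing_inv, hDmsymm]
  have hCmBm : Cm = Bmᵀ := by
    ext v p
    exact hM.apply (![i, j] p) (k v)
  have hXsymm : X 0 1 = X 1 0 := by
    have : Xᵀ = X := by
      rw [hX, hCmBm, Matrix.transpose_mul, Matrix.transpose_mul, Matrix.transpose_transpose,
        hinvsymm, Matrix.mul_assoc]
    exact congrFun (congrFun this 1) 0
  obtain ⟨t, ht⟩ := aux_poly (M i i - X 0 0) (M i j - X 0 1) (M j j - X 1 1)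
  set Mt := M + t • (Matrix.single i j (1 : K) + Matrix.single j i (1 : K))
    with hMtdef
  -- entries of Mt
  have hMt : ∀ x y, Mt x y
      = M x y + t * ((if i = x ∧ j = y then 1 else 0) + (if j = x ∧ i = y then 1 else 0)) := by
    intro x y
    rw [hMtdef]
    simp only [Matrix.add_apply, Matrix.smul_apply, smul_eq_mul, Matrix.single,
      Matrix.of_apply]
    try ring
  set A2 : Matrix (Fin 2) (Fin 2) K :=
    !![M i i, M i j + t; M j i + t, M j j] with hA2
  have hsub : Mt.submatrix ρ ρ = Matrix.fromBlocks A2 Bm Cm Dm := by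
    ext p q
    rcases p with p | p <;> rcases q with q | q
    · fin_cases p <;> fin_cases q <;>
        simp [hMt, hρdef, hij, Ne.symm hij, hA2]
    · fin_cases p <;>
        simp [hMt, hρdef, hij, Ne.symm hij, (k q).2.1.symm, (k q).2.2.symm, Ne.symm (k q).2.1,
          Ne.symm (k q).2.2, hBm, hNdef]
    · fin_cases q <;>
        simp [hMt, hρdef, hij, Ne.symm hij, (k p).2.1.symm, (k p).2.2.symm, Ne.symm (k p).2.1,
          Ne.symm (k p).2.2, hCm, hNdef]
    · simp [hMt, hρdef, (k p).2.1.symm, (k p).2.2.symm, Ne.symm (k p).2.1, Ne.symm (k p).2.2,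
        (k q).2.1.symm, (k q).2.2.symm, hDm, hNdef]
  have hdet : (Mt.submatrix ρ ρ).det ≠ 0 := by
    rw [hsub, Matrix.det_fromBlocks₂₂]
    have hAX : A2 - Bm * ⅟Dm * Cm =
        !![M i i - X 0 0, M i j - X 0 1 + t; M i j - X 0 1 + t, M j j - X 1 1] := by
      rw [← hX]
      ext p q
      fin_cases p <;> fin_cases q <;>
        simp [hA2, Matrix.sub_apply, hM.apply i j, ← hXsymm] <;> try ring
    rw [hAX, Matrix.det_fin_two_of]
    intro h
    rcases mul_eq_zero.1 h with h | h
    · exact hDunit.ne_zero h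
    · exact ht h
  -- rank of Mt is at least m + 2
  have hρ0 : ρ (Sum.inl 0) = i := rfl
  have hρ1 : ρ (Sum.inl 1) = j := rfl
  have hρr : ∀ v, ρ (Sum.inr v) = ((k v) : Fin n) := fun v => rfl
  have hρinj : Function.Injective ρ := by
    intro p q hpq
    rcases p with p | p <;> rcases q with q | q
    · fin_cases p <;> fin_cases q <;>
        simp only [hρdef, Sum.elim_inl, Fin.mk_zero, Fin.mk_one, Fin.isValue,
          Matrix.cons_val_zero, Matrix.cons_val_one, Matrix.head_cons] at hpq <;>
        first
          | rfl
          | exact absurd hpq hij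
          | exact absurd hpq.symm hij
    · exfalso
      fin_cases p <;>
        simp only [hρdef, Sum.elim_inl, Sum.elim_inr, Fin.mk_zero, Fin.mk_one, Fin.isValue,
          Matrix.cons_val_zero, Matrix.cons_val_one, Matrix.head_cons] at hpq
      · exact (k q).2.1 hpq.symm
      · exact (k q).2.2 hpq.symm
    · exfalso
      fin_cases q <;>
        simp only [hρdef, Sum.elim_inl, Sum.elim_inr, Fin.mk_zero, Fin.mk_one, Fin.isValue,
          Matrix.cons_val_zero, Matrix.cons_val_one, Matrix.head_cons] at hpq
      · exact (k p).2.1 hpq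
      · exact (k p).2.2 hpq
    · simp only [hρdef, Sum.elim_inr] at hpq
      rw [hkinj (Subtype.ext hpq)]
  have hindep_sub : LinearIndependent K (fun p => (Mt.submatrix ρ ρ) p) := by
    apply linearIndependent_rows_iff_isUnit.2
    rw [Matrix.isUnit_iff_isUnit_det, isUnit_iff_ne_zero]
    exact hdet
  have hindep : LinearIndependent K (fun p : Fin 2 ⊕ Fin m => Mt (ρ p)) := by
    have h' : (⇑(LinearMap.funLeft K K ρ) ∘ fun p : Fin 2 ⊕ Fin m => Mt (ρ p))
        = fun p => (Mt.submatrix ρ ρ) p := by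
      funext p q; rfl
    have := LinearIndependent.of_comp (LinearMap.funLeft K K ρ) (h' ▸ hindep_sub)
    exact this
  have hrankMt : m + 2 ≤ Mt.rank := by
    have hcard := linearIndependent_iff_card_eq_finrank_span.1 hindep
    have hle : Submodule.span K (Set.range (fun p : Fin 2 ⊕ Fin m => Mt (ρ p)))
        ≤ Submodule.span K (Set.range Mt) := by
      apply Submodule.span_mono
      rintro _ ⟨p, rfl⟩
      exact ⟨ρ p, rfl⟩
    have hfr := Submodule.finrank_mono hle
    rw [Mt.rank_eq_finrank_span_row]
    calc m + 2 = Fintype.card (Fin 2 ⊕ Fin m) := by simp [Fintype.card_sum]; ring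
      _ ≤ _ := by rw [hcard]; exact hfr
  have hMtr := hrk t
  rw [← hMtdef] at hMtr
  omega
end

section
/- Let K be a field of characteristic 2, n ≥ 2 an integer, and r a positive integer with r < n. Let A be an n×n symmetric matrix over K, written in block form A = [[P, C₀],[C₀ᵀ, a₀]] with P an (n-1)×(n-1) symmetric matrix, C₀ ∈ K^{n-1} and a₀ ∈ K. Let C ∈ K^{n-1} and set N = [[0_{(n-1)×(n-1)}, C],[Cᵀ, 1]]. If rank(A + t·N) ≤ r for every t ∈ K, then rank(P + C·Cᵀ) ≤ r − 1. -/
open Matrix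

set_option linter.unusedVariables false
set_option linter.unusedSectionVars false

namespace Stmt7Aux

set_option linter.unusedSectionVars false

variable {K : Type*} [Field K] {m l : Type*} [Fintype m] [DecidableEq m]
  [Fintype l] [DecidableEq l]

/-- nullity of a (possibly rectangular) matrix -/
noncomputable def nul (A : Matrix l m K) : ℕ :=
  Module.finrank K (LinearMap.ker A.mulVecLin)

lemma rank_add_nul (A : Matrix l m K) : A.rank + nul A = Fintype.card m := by
  rw [Matrix.rank, nul]
  rw [LinearMap.finrank_range_add_finrank_ker A.mulVecLin,
    Module.finrank_fintype_fun_eq_card]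

lemma nul_le_finrank (A : Matrix m m K) (W : Submodule K (l → K))
    (f : (m → K) →ₗ[K] (l → K))
    (hmap : ∀ x, A.mulVec x = 0 → f x ∈ W)
    (hinj : ∀ x, A.mulVec x = 0 → f x = 0 → x = 0) :
    nul A ≤ Module.finrank K W := by
  have h1 : ∀ x ∈ LinearMap.ker A.mulVecLin, f x ∈ W := by
    intro x hx
    exact hmap x (by simpa [LinearMap.mem_ker, Matrix.mulVecLin_apply] using hx)
  refine LinearMap.finrank_le_finrank_of_injective (f := f.restrict h1) ?_
  rintro ⟨x, hx⟩ ⟨y, hy⟩ hxy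
  have hx' : A.mulVec x = 0 := by simpa [LinearMap.mem_ker] using hx
  have hy' : A.mulVec y = 0 := by simpa [LinearMap.mem_ker] using hy
  have : f x = f y := by
    simpa [LinearMap.restrict_apply, Subtype.ext_iff] using hxy
  have hxy0 : A.mulVec (x - y) = 0 := by
    rw [Matrix.mulVec_sub, hx', hy', sub_zero]
  have : x - y = 0 := hinj _ hxy0 (by rw [map_sub, this, sub_self])
  exact Subtype.ext (sub_eq_zero.mp this)



lemma vecMulVec_mulVec' (v w x : m → K) :
    (vecMulVec v w) *ᵥ x = (w ⬝ᵥ x) • v := by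
  ext i
  simp only [Matrix.mulVec, vecMulVec_apply, dotProduct, Pi.smul_apply, smul_eq_mul,
    Finset.sum_mul]
  exact Finset.sum_congr rfl fun j _ => by ring

lemma dot_mulVec_symm {P : Matrix m m K} (hP : P.IsSymm) (a b : m → K) :
    (P *ᵥ a) ⬝ᵥ b = (P *ᵥ b) ⬝ᵥ a := by
  rw [dotProduct_comm, dotProduct_mulVec, ← Matrix.mulVec_transpose, hP.eq]

lemma add_self_eq_zero' (h2 : (2 : K) = 0) (a : K) : a + a = 0 := by
  rw [← two_mul, h2, zero_mul]

/-- rank of `A + v vᵀ` is at most `rank A + 1`. -/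
lemma rank_add_vecMulVec_le (A : Matrix m m K) (v : m → K) :
    (A + vecMulVec v v).rank ≤ A.rank + 1 := by
  by_cases hv : v = 0
  · have h0 : vecMulVec v v = 0 := by ext i j; simp [vecMulVec_apply, hv]
    rw [h0, add_zero]
    exact Nat.le_succ _
  · have hle : LinearMap.range (A + vecMulVec v v).mulVecLin ≤
        LinearMap.range A.mulVecLin ⊔ Submodule.span K {v} := by
      rintro _ ⟨y, rfl⟩
      rw [Matrix.mulVecLin_apply, Matrix.add_mulVec, vecMulVec_mulVec']
      exact Submodule.add_mem_sup (LinearMap.mem_range_self _ y)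
        (Submodule.smul_mem _ _ (Submodule.mem_span_singleton_self v))
    calc (A + vecMulVec v v).rank
        ≤ Module.finrank K ↥(LinearMap.range A.mulVecLin ⊔ Submodule.span K {v}) :=
          Submodule.finrank_mono hle
      _ ≤ A.rank + 1 := by
          have := Submodule.finrank_sup_add_finrank_inf_eq
            (LinearMap.range A.mulVecLin) (Submodule.span K {v})
          have hs : Module.finrank K (Submodule.span K {v}) = 1 :=
            finrank_span_singleton hv
          rw [Matrix.rank]
          omega

/-- if `v` is in the column space, rank of `P + v vᵀ` is at most `rank P`. -/
lemma rank_le_of_mem_range {P : Matrix m m K} {v : m → K} (x : m → K)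
    (hx : P *ᵥ x = v) : (P + vecMulVec v v).rank ≤ P.rank := by
  apply Submodule.finrank_mono
  rintro _ ⟨y, rfl⟩
  refine ⟨y + (v ⬝ᵥ y) • x, ?_⟩
  rw [Matrix.mulVecLin_apply, Matrix.mulVecLin_apply, Matrix.mulVec_add,
    Matrix.mulVec_smul, hx, Matrix.add_mulVec, vecMulVec_mulVec']

/-- duality for symmetric matrices: if `u` kills the kernel, it is in the column space. -/
lemma exists_mulVec_of {P : Matrix m m K} (hP : P.IsSymm) (u : m → K)
    (h : ∀ k, P *ᵥ k = 0 → u ⬝ᵥ k = 0) : ∃ x, P *ᵥ x = u := by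
  set B : Matrix (m ⊕ Unit) m K := Matrix.fromRows P (Matrix.replicateRow Unit u) with hB
  have hkerB : LinearMap.ker B.mulVecLin = LinearMap.ker P.mulVecLin := by
    ext x
    simp only [LinearMap.mem_ker, Matrix.mulVecLin_apply, hB, Matrix.fromRows_mulVec]
    constructor
    · intro hx
      ext i
      exact congrFun hx (Sum.inl i)
    · intro hx
      have hu : u ⬝ᵥ x = 0 := h x hx
      have hrow : Matrix.replicateRow Unit u *ᵥ x = 0 := by
        ext i
        exact hu
      rw [hx, hrow]
      ext i
      cases i <;> rfl
  have hrankB : B.rank = P.rank := by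
    have h1 := rank_add_nul B
    have h2 := rank_add_nul P
    unfold nul at h1 h2
    rw [hkerB] at h1
    omega
  have hrankBT : Bᵀ.rank = P.rank := by rw [Matrix.rank_transpose, hrankB]
  have hBT : Bᵀ = Matrix.fromCols Pᵀ (Matrix.replicateCol Unit u) := by
    rw [hB, Matrix.transpose_fromRows, Matrix.transpose_replicateRow]
  have hle : LinearMap.range P.mulVecLin ≤ LinearMap.range Bᵀ.mulVecLin := by
    rintro _ ⟨y, rfl⟩
    refine ⟨Sum.elim y 0, ?_⟩
    rw [Matrix.mulVecLin_apply, Matrix.mulVecLin_apply, hBT,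
      Matrix.fromCols_mulVec_sumElim]
    simp [hP.eq]
  have heq : LinearMap.range P.mulVecLin = LinearMap.range Bᵀ.mulVecLin :=
    Submodule.eq_of_le_of_finrank_le hle (le_of_eq hrankBT)
  have hu : u ∈ LinearMap.range Bᵀ.mulVecLin := by
    refine ⟨Sum.elim 0 (fun _ => 1), ?_⟩
    rw [Matrix.mulVecLin_apply, hBT, Matrix.fromCols_mulVec_sumElim]
    ext i
    simp [Matrix.replicateCol, Matrix.mulVec, dotProduct]
  rw [← heq] at hu
  obtain ⟨x, hx⟩ := hu
  exact ⟨x, hx⟩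

/-- if `v` is not in the column space of a symmetric `P`, `rank (P + vvᵀ) ≥ rank P + 1`. -/
lemma rank_lower_not_mem {P : Matrix m m K} (hP : P.IsSymm) {v : m → K}
    (hv : ¬ ∃ x, P *ᵥ x = v) : P.rank + 1 ≤ (P + vecMulVec v v).rank := by
  obtain ⟨k₀, hk₀, hk₀v⟩ : ∃ k, P *ᵥ k = 0 ∧ v ⬝ᵥ k ≠ 0 := by
    by_contra hcon
    push_neg at hcon
    exact hv (exists_mulVec_of hP v hcon)
  have hvne : v ≠ 0 := by
    rintro rfl
    exact hv ⟨0, by simp⟩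
  have hsub : LinearMap.ker (P + vecMulVec v v).mulVecLin ≤ LinearMap.ker P.mulVecLin := by
    intro x hx
    simp only [LinearMap.mem_ker, Matrix.mulVecLin_apply, Matrix.add_mulVec,
      vecMulVec_mulVec'] at hx ⊢
    have hvx : v ⬝ᵥ x = 0 := by
      by_contra hne
      refine hv ⟨-(v ⬝ᵥ x)⁻¹ • x, ?_⟩
      rw [Matrix.mulVec_smul]
      rw [eq_neg_of_add_eq_zero_left hx]
      rw [smul_neg, neg_smul, neg_neg, smul_smul, inv_mul_cancel₀ hne, one_smul]
    rw [hvx, zero_smul, add_zero] at hx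
    exact hx
  have hk₀mem : k₀ ∈ LinearMap.ker P.mulVecLin := by
    simpa [LinearMap.mem_ker] using hk₀
  have hk₀not : k₀ ∉ LinearMap.ker (P + vecMulVec v v).mulVecLin := by
    simp only [LinearMap.mem_ker, Matrix.mulVecLin_apply, Matrix.add_mulVec,
      vecMulVec_mulVec', hk₀, zero_add]
    intro hmem
    rcases smul_eq_zero.mp hmem with h' | h'
    · exact hk₀v h'
    · exact hvne h'
  have hker : LinearMap.ker (P + vecMulVec v v).mulVecLin < LinearMap.ker P.mulVecLin :=
    lt_of_le_of_ne hsub (fun he => hk₀not (by rw [he]; exact hk₀mem))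
  have hlt := Submodule.finrank_lt_finrank_of_lt hker
  have h1 := rank_add_nul (P + vecMulVec v v)
  have h2 := rank_add_nul P
  unfold nul at h1 h2
  omega

lemma colU_mulVec (u : m → K) (c : Unit → K) :
    (Matrix.of fun i (_ : Unit) => u i) *ᵥ c = c () • u := by
  ext i
  simp [Matrix.mulVec, dotProduct, mul_comm]

lemma rowU_mulVec (u x : m → K) :
    (Matrix.of fun (_ : Unit) j => u j) *ᵥ x = fun _ => u ⬝ᵥ x := by
  ext i
  simp [Matrix.mulVec, dotProduct]

lemma oneU_mulVec (c : Unit → K) :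
    (Matrix.of fun (_ _ : Unit) => (1 : K)) *ᵥ c = fun _ => c () := by
  ext i
  simp [Matrix.mulVec, dotProduct]

/-- unpacking kernel membership of the bordered matrix with corner `a • 1`. -/
lemma bor_kernel {P : Matrix m m K} {u : m → K} {z : (m ⊕ Unit) → K}
    (hz : (fromBlocks P (Matrix.of fun i (_ : Unit) => u i)
      (Matrix.of fun (_ : Unit) j => u j) 0) *ᵥ z = 0) :
    P *ᵥ (z ∘ Sum.inl) + z (Sum.inr ()) • u = 0 ∧ u ⬝ᵥ (z ∘ Sum.inl) = 0 := by
  rw [Matrix.fromBlocks_mulVec, colU_mulVec, rowU_mulVec, Matrix.zero_mulVec, add_zero] at hz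
  constructor
  · ext i
    exact congrFun hz (Sum.inl i)
  · exact congrFun hz (Sum.inr ())

lemma rank_bor_lower_not_mem {P : Matrix m m K} (hP : P.IsSymm) {u : m → K}
    (hu : ¬ ∃ y, P *ᵥ y = u) :
    P.rank + 2 ≤ (fromBlocks P (Matrix.of fun i (_ : Unit) => u i)
      (Matrix.of fun (_ : Unit) j => u j) 0).rank := by
  obtain ⟨k₀, hk₀, hk₀u⟩ : ∃ k, P *ᵥ k = 0 ∧ u ⬝ᵥ k ≠ 0 := by
    by_contra hcon
    push_neg at hcon
    exact hu (exists_mulVec_of hP u hcon)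
  have hune : u ≠ 0 := by
    rintro rfl
    exact hu ⟨0, by simp⟩
  set B := fromBlocks P (Matrix.of fun i (_ : Unit) => u i)
      (Matrix.of fun (_ : Unit) j => u j) (0 : Matrix Unit Unit K) with hBdef
  set W := LinearMap.ker P.mulVecLin ⊓
      LinearMap.ker (Matrix.of fun (_ : Unit) j => u j).mulVecLin with hWdef
  have h1 : nul B ≤ Module.finrank K W := by
    refine nul_le_finrank B W (LinearMap.funLeft K K Sum.inl) ?_ ?_
    · intro z hz
      obtain ⟨hz1, hz2⟩ := bor_kernel hz
      have hc : z (Sum.inr ()) = 0 := by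
        by_contra hc
        refine hu ⟨-(z (Sum.inr ()))⁻¹ • (z ∘ Sum.inl), ?_⟩
        rw [Matrix.mulVec_smul, eq_neg_of_add_eq_zero_left hz1]
        rw [smul_neg, neg_smul, neg_neg, smul_smul, inv_mul_cancel₀ hc, one_smul]
      rw [hc, zero_smul, add_zero] at hz1
      refine Submodule.mem_inf.mpr ⟨?_, ?_⟩
      · simpa [LinearMap.mem_ker, Matrix.mulVecLin_apply, LinearMap.funLeft] using hz1
      · simp only [LinearMap.mem_ker, Matrix.mulVecLin_apply, LinearMap.funLeft]
        rw [rowU_mulVec]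
        ext i
        exact hz2
    · intro z hz hz0
      obtain ⟨hz1, hz2⟩ := bor_kernel hz
      have hx0 : z ∘ Sum.inl = 0 := by
        ext i
        exact congrFun hz0 i
      rw [hx0, Matrix.mulVec_zero, zero_add] at hz1
      have hc : z (Sum.inr ()) = 0 := by
        rcases smul_eq_zero.mp hz1 with h' | h'
        · exact h'
        · exact absurd h' hune
      ext i
      cases i with
      | inl i => exact congrFun hx0 i
      | inr i => cases i; exact hc
  have h2 : Module.finrank K W < nul P := by
    have hWle : W ≤ LinearMap.ker P.mulVecLin := inf_le_left
    have hk₀mem : k₀ ∈ LinearMap.ker P.mulVecLin := by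
      simpa [LinearMap.mem_ker] using hk₀
    have hk₀not : k₀ ∉ W := by
      intro hmem
      have := (Submodule.mem_inf.mp hmem).2
      simp only [LinearMap.mem_ker, Matrix.mulVecLin_apply] at this
      rw [rowU_mulVec] at this
      exact hk₀u (congrFun this ())
    exact Submodule.finrank_lt_finrank_of_lt
      (lt_of_le_of_ne hWle (fun he => hk₀not (by rw [he]; exact hk₀mem)))
  have h3 := rank_add_nul B
  have h4 := rank_add_nul P
  rw [Fintype.card_sum, Fintype.card_unit] at h3
  omega

lemma rank_bor_lower_mem {P : Matrix m m K} {u y : m → K}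
    (hy : P *ᵥ y = u) (hq : u ⬝ᵥ y ≠ 0) :
    P.rank + 1 ≤ (fromBlocks P (Matrix.of fun i (_ : Unit) => u i)
      (Matrix.of fun (_ : Unit) j => u j) 0).rank := by
  set B := fromBlocks P (Matrix.of fun i (_ : Unit) => u i)
      (Matrix.of fun (_ : Unit) j => u j) (0 : Matrix Unit Unit K) with hBdef
  have h1 : nul B ≤ nul P := by
    refine nul_le_finrank B (LinearMap.ker P.mulVecLin)
      (LinearMap.funLeft K K Sum.inl +
        (LinearMap.proj (Sum.inr ())).smulRight y) ?_ ?_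
    · intro z hz
      obtain ⟨hz1, hz2⟩ := bor_kernel hz
      simp only [LinearMap.mem_ker, LinearMap.add_apply, Matrix.mulVecLin_apply,
        LinearMap.funLeft_apply, LinearMap.smulRight_apply, LinearMap.proj_apply]
      rw [Matrix.mulVec_add, Matrix.mulVec_smul, hy]
      exact hz1
    · intro z hz hz0
      obtain ⟨hz1, hz2⟩ := bor_kernel hz
      simp only [LinearMap.add_apply, LinearMap.funLeft_apply,
        LinearMap.smulRight_apply, LinearMap.proj_apply] at hz0
      have hxy : z ∘ Sum.inl = -(z (Sum.inr ()) • y) :=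
        eq_neg_of_add_eq_zero_left hz0
      have hd : u ⬝ᵥ (z ∘ Sum.inl) = -(z (Sum.inr ()) * (u ⬝ᵥ y)) := by
        rw [hxy]
        simp [dotProduct_smul, smul_eq_mul]
      rw [hz2] at hd
      have hc : z (Sum.inr ()) = 0 := by
        rcases mul_eq_zero.mp (neg_eq_zero.mp hd.symm) with h' | h'
        · exact h'
        · exact absurd h' hq
      have hx0 : z ∘ Sum.inl = 0 := by rw [hxy, hc, zero_smul, neg_zero]
      ext i
      cases i with
      | inl i => exact congrFun hx0 i
      | inr i => cases i; exact hc
  have h3 := rank_add_nul B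
  have h4 := rank_add_nul P
  rw [Fintype.card_sum, Fintype.card_unit] at h3
  omega

lemma rank_lower_mem {P : Matrix m m K} {v x : m → K}
    (hx : P *ᵥ x = v) (hq : (1 : K) + v ⬝ᵥ x ≠ 0) :
    P.rank ≤ (P + vecMulVec v v).rank := by
  have h1 : nul (P + vecMulVec v v) ≤ nul P := by
    refine nul_le_finrank (P + vecMulVec v v) (LinearMap.ker P.mulVecLin)
      ((1 + vecMulVec x v).mulVecLin) ?_ ?_
    · intro h hh
      simp only [LinearMap.mem_ker, Matrix.mulVecLin_apply]
      rw [Matrix.add_mulVec, Matrix.one_mulVec, vecMulVec_mulVec',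
        Matrix.mulVec_add, Matrix.mulVec_smul, hx]
      rw [Matrix.add_mulVec, vecMulVec_mulVec'] at hh
      exact hh
    · intro h hh hh0
      simp only [Matrix.mulVecLin_apply] at hh0
      rw [Matrix.add_mulVec, Matrix.one_mulVec, vecMulVec_mulVec'] at hh0
      have hxy : h = -((v ⬝ᵥ h) • x) := eq_neg_of_add_eq_zero_left hh0
      have hd : v ⬝ᵥ h = -((v ⬝ᵥ h) * (v ⬝ᵥ x)) := by
        conv_lhs => rw [hxy]
        simp [dotProduct_smul, smul_eq_mul]
      have hc : v ⬝ᵥ h = 0 := by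
        have : (v ⬝ᵥ h) * ((1 : K) + v ⬝ᵥ x) = 0 := by
          rw [mul_add, mul_one]
          rw [eq_neg_iff_add_eq_zero] at hd
          linear_combination hd
        rcases mul_eq_zero.mp this with h' | h'
        · exact h'
        · exact absurd h' hq
      rw [hxy, hc, zero_smul, neg_zero]
  have h3 := rank_add_nul (P + vecMulVec v v)
  have h4 := rank_add_nul P
  omega

lemma rank_upper_q1 {P : Matrix m m K} (hP : P.IsSymm) {v x : m → K}
    (hx : P *ᵥ x = v) (hq : (1 : K) + v ⬝ᵥ x = 0) :
    (P + vecMulVec v v).rank + 1 ≤ P.rank := by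
  have hvne : v ≠ 0 := by
    rintro rfl
    rw [zero_dotProduct, add_zero] at hq
    exact one_ne_zero hq
  have hxnk : x ∉ LinearMap.ker P.mulVecLin := by
    intro hmem
    simp only [LinearMap.mem_ker, Matrix.mulVecLin_apply] at hmem
    rw [hmem] at hx
    exact hvne hx.symm
  have hsub : LinearMap.ker P.mulVecLin ⊔ Submodule.span K {x} ≤
      LinearMap.ker (P + vecMulVec v v).mulVecLin := by
    refine sup_le ?_ ?_
    · intro h hh
      simp only [LinearMap.mem_ker, Matrix.mulVecLin_apply] at hh ⊢
      rw [Matrix.add_mulVec, vecMulVec_mulVec', hh, zero_add]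
      have hvh : v ⬝ᵥ h = 0 := by
        rw [← hx, dot_mulVec_symm hP, hh, zero_dotProduct]
      rw [hvh, zero_smul]
    · rw [Submodule.span_le, Set.singleton_subset_iff]
      simp only [SetLike.mem_coe, LinearMap.mem_ker, Matrix.mulVecLin_apply]
      rw [Matrix.add_mulVec, vecMulVec_mulVec', hx]
      calc v + (v ⬝ᵥ x) • v = ((1 : K) + v ⬝ᵥ x) • v := by rw [add_smul, one_smul]
        _ = 0 := by rw [hq, zero_smul]
  have hlt : LinearMap.ker P.mulVecLin < LinearMap.ker P.mulVecLin ⊔ Submodule.span K {x} := by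
    refine lt_of_le_of_ne le_sup_left (fun he => hxnk ?_)
    rw [he]
    exact Submodule.mem_sup_right (Submodule.mem_span_singleton_self x)
  have h1 : nul P < nul (P + vecMulVec v v) := by
    calc nul P < Module.finrank K ↥(LinearMap.ker P.mulVecLin ⊔ Submodule.span K {x}) :=
          Submodule.finrank_lt_finrank_of_lt hlt
      _ ≤ nul (P + vecMulVec v v) := Submodule.finrank_mono hsub
  have h3 := rank_add_nul (P + vecMulVec v v)
  have h4 := rank_add_nul P
  omega

lemma rank_le_add_one (h2 : (2 : K) = 0) (P : Matrix m m K) (v : m → K) :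
    P.rank ≤ (P + vecMulVec v v).rank + 1 := by
  have hPP : (P + vecMulVec v v) + vecMulVec v v = P := by
    ext i j
    simp only [Matrix.add_apply, vecMulVec_apply]
    rw [add_assoc, add_self_eq_zero' h2, add_zero]
  calc P.rank = ((P + vecMulVec v v) + vecMulVec v v).rank := by rw [hPP]
    _ ≤ (P + vecMulVec v v).rank + 1 := rank_add_vecMulVec_le _ _

lemma schur_step (h2 : (2 : K) = 0) {P : Matrix m m K} (w : m → K) :
    (P + vecMulVec w w).rank + 1 ≤ (fromBlocks P (Matrix.of fun i (_ : Unit) => w i)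
      (Matrix.of fun (_ : Unit) j => w j) (Matrix.of fun (_ _ : Unit) => (1 : K))).rank := by
  set B := fromBlocks P (Matrix.of fun i (_ : Unit) => w i)
      (Matrix.of fun (_ : Unit) j => w j) (Matrix.of fun (_ _ : Unit) => (1 : K)) with hBdef
  have hker : ∀ z : (m ⊕ Unit) → K, B *ᵥ z = 0 →
      P *ᵥ (z ∘ Sum.inl) + z (Sum.inr ()) • w = 0 ∧
        w ⬝ᵥ (z ∘ Sum.inl) + z (Sum.inr ()) = 0 := by
    intro z hz
    rw [hBdef, Matrix.fromBlocks_mulVec, colU_mulVec, rowU_mulVec, oneU_mulVec] at hz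
    exact ⟨by ext i; exact congrFun hz (Sum.inl i), congrFun hz (Sum.inr ())⟩
  have h1 : nul B ≤ nul (P + vecMulVec w w) := by
    refine nul_le_finrank B (LinearMap.ker (P + vecMulVec w w).mulVecLin)
      (LinearMap.funLeft K K Sum.inl) ?_ ?_
    · intro z hz
      obtain ⟨hz1, hz2⟩ := hker z hz
      simp only [LinearMap.mem_ker, Matrix.mulVecLin_apply, LinearMap.funLeft_apply]
      have hc : z (Sum.inr ()) = -(w ⬝ᵥ (z ∘ Sum.inl)) := by
        rw [eq_neg_iff_add_eq_zero, add_comm]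
        exact hz2
      rw [hc] at hz1
      rw [Matrix.add_mulVec, vecMulVec_mulVec']
      have key : ∀ a b : m → K, a + -b = 0 → a + b = 0 := by
        intro a b hab
        have hb : a = b := by linear_combination (norm := abel) hab
        rw [hb]
        ext i
        exact add_self_eq_zero' h2 (b i)
      rw [neg_smul] at hz1
      exact key _ _ hz1
    · intro z hz hz0
      obtain ⟨hz1, hz2⟩ := hker z hz
      have hx0 : z ∘ Sum.inl = 0 := hz0
      rw [hx0, dotProduct_zero, zero_add] at hz2
      ext i
      cases i with
      | inl i => exact congrFun hx0 i
      | inr i => cases i; exact hz2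
  have h3 := rank_add_nul B
  have h4 := rank_add_nul (P + vecMulVec w w)
  rw [Fintype.card_sum, Fintype.card_unit] at h3
  omega

/-- The key linear-algebra lemma in characteristic 2. -/
lemma key (h2 : (2 : K) = 0) (P : Matrix m m K) (hP : P.IsSymm) (u v : m → K) :
    (P + vecMulVec v v).rank ≤
      max ((fromBlocks P (Matrix.of fun i (_ : Unit) => u i)
        (Matrix.of fun (_ : Unit) j => u j) 0).rank - 1)
        ((P + vecMulVec (u + v) (u + v)).rank) := by
  by_cases hu : ∃ y, P *ᵥ y = u
  · obtain ⟨y, hy⟩ := hu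
    by_cases hv : ∃ x, P *ᵥ x = v
    · obtain ⟨x, hx⟩ := hv
      by_cases hqy : u ⬝ᵥ y = 0
      · -- C2
        have hw : P *ᵥ (x + y) = u + v := by
          rw [Matrix.mulVec_add, hx, hy, add_comm]
        have hcross : (u + v) ⬝ᵥ (x + y) = v ⬝ᵥ x := by
          rw [add_dotProduct, dotProduct_add, dotProduct_add]
          have hux : u ⬝ᵥ x = v ⬝ᵥ y := by
            rw [← hy, ← hx, dot_mulVec_symm hP]
          rw [hux, hqy]
          have : v ⬝ᵥ y + v ⬝ᵥ y = 0 := add_self_eq_zero' h2 _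
          ring_nf
          linear_combination this
        by_cases hq1 : (1 : K) + v ⬝ᵥ x = 0
        · refine le_max_of_le_right ?_
          have ha := rank_upper_q1 hP hx hq1
          have hb := rank_le_add_one h2 P (u + v)
          omega
        · refine le_max_of_le_right ?_
          have ha := rank_le_of_mem_range x hx
          have hb := rank_lower_mem hw (by rw [hcross]; exact hq1)
          omega
      · -- B2
        refine le_max_of_le_left ?_
        have ha := rank_le_of_mem_range x hx
        have hb := rank_bor_lower_mem hy hqy
        omega
    · -- B1 / C1
      refine le_max_of_le_right ?_
      have hwnot : ¬ ∃ z, P *ᵥ z = u + v := by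
        rintro ⟨z, hz⟩
        refine hv ⟨z - y, ?_⟩
        rw [Matrix.mulVec_sub, hz, hy]
        abel
      have ha := rank_add_vecMulVec_le P v
      have hb := rank_lower_not_mem hP hwnot
      omega
  · -- A
    refine le_max_of_le_left ?_
    have ha := rank_add_vecMulVec_le P v
    have hb := rank_bor_lower_not_mem hP hu
    omega

end Stmt7Aux


open Stmt7Aux in
/-- Over a field of characteristic 2: if the `n × n` symmetric matrix
`A = [[P, C₀],[C₀ᵀ, a₀]]` satisfies `rank (A + t • N) ≤ r` for every `t`, where
`N = [[0, C],[Cᵀ, 1]]`, then `rank (P + C·Cᵀ) ≤ r − 1`. -/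
theorem stmt7 {K : Type*} [Field K] (hchar : ringChar K = 2) (n r : ℕ) (hn : 2 ≤ n)
    (hr0 : 0 < r) (hrn : r < n)
    (P : Matrix (Fin (n - 1)) (Fin (n - 1)) K) (hP : P.IsSymm)
    (C₀ C : Fin (n - 1) → K) (a₀ : K)
    (hrk : ∀ t : K,
      (Matrix.fromBlocks P (Matrix.of fun i (_ : Unit) => C₀ i)
          (Matrix.of fun (_ : Unit) j => C₀ j) (Matrix.of fun (_ _ : Unit) => a₀)
        + t • Matrix.fromBlocks (0 : Matrix (Fin (n - 1)) (Fin (n - 1)) K)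
          (Matrix.of fun i (_ : Unit) => C i)
          (Matrix.of fun (_ : Unit) j => C j)
          (Matrix.of fun (_ _ : Unit) => (1 : K))).rank ≤ r) :
    (P + Matrix.vecMulVec C C).rank ≤ r - 1 := by
  have h2 : (2 : K) = 0 := by
    have h := ringChar.Nat.cast_ringChar (R := K)
    rw [hchar] at h
    exact_mod_cast h
  set u : Fin (n - 1) → K := fun i => C₀ i + a₀ * C i with hu
  set w : Fin (n - 1) → K := u + C with hw
  -- the matrix at t = a₀ is the bordered matrix
  have hE1 : (Matrix.fromBlocks P (Matrix.of fun i (_ : Unit) => C₀ i)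
          (Matrix.of fun (_ : Unit) j => C₀ j) (Matrix.of fun (_ _ : Unit) => a₀)
        + a₀ • Matrix.fromBlocks (0 : Matrix (Fin (n - 1)) (Fin (n - 1)) K)
          (Matrix.of fun i (_ : Unit) => C i)
          (Matrix.of fun (_ : Unit) j => C j)
          (Matrix.of fun (_ _ : Unit) => (1 : K)))
      = Matrix.fromBlocks P (Matrix.of fun i (_ : Unit) => u i)
          (Matrix.of fun (_ : Unit) j => u j) 0 := by
    ext i j
    cases i with
    | inl i =>
      cases j with
      | inl j => simp
      | inr j => simp [hu]
    | inr i =>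
      cases j with
      | inl j => simp [hu]
      | inr j =>
        simp only [Matrix.add_apply, Matrix.smul_apply, Matrix.fromBlocks_apply₂₂,
          Matrix.of_apply, Matrix.zero_apply, smul_eq_mul, mul_one]
        exact add_self_eq_zero' h2 a₀
  -- the matrix at t = a₀ + 1 is the bordered matrix with corner 1
  have hE2 : (Matrix.fromBlocks P (Matrix.of fun i (_ : Unit) => C₀ i)
          (Matrix.of fun (_ : Unit) j => C₀ j) (Matrix.of fun (_ _ : Unit) => a₀)
        + (a₀ + 1) • Matrix.fromBlocks (0 : Matrix (Fin (n - 1)) (Fin (n - 1)) K)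
          (Matrix.of fun i (_ : Unit) => C i)
          (Matrix.of fun (_ : Unit) j => C j)
          (Matrix.of fun (_ _ : Unit) => (1 : K)))
      = Matrix.fromBlocks P (Matrix.of fun i (_ : Unit) => w i)
          (Matrix.of fun (_ : Unit) j => w j) (Matrix.of fun (_ _ : Unit) => (1 : K)) := by
    ext i j
    cases i with
    | inl i =>
      cases j with
      | inl j => simp
      | inr j =>
        simp only [Matrix.add_apply, Matrix.smul_apply, Matrix.fromBlocks_apply₁₂,
          Matrix.of_apply, smul_eq_mul, hw, hu, Pi.add_apply]
        ring
    | inr i =>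
      cases j with
      | inl j =>
        simp only [Matrix.add_apply, Matrix.smul_apply, Matrix.fromBlocks_apply₂₁,
          Matrix.of_apply, smul_eq_mul, hw, hu, Pi.add_apply]
        ring
      | inr j =>
        simp only [Matrix.add_apply, Matrix.smul_apply, Matrix.fromBlocks_apply₂₂,
          Matrix.of_apply, smul_eq_mul, mul_one]
        calc a₀ + (a₀ + 1) = (a₀ + a₀) + 1 := by ring
          _ = 1 := by rw [add_self_eq_zero' h2, zero_add]
  have hT : (Matrix.fromBlocks P (Matrix.of fun i (_ : Unit) => u i)
      (Matrix.of fun (_ : Unit) j => u j) (0 : Matrix Unit Unit K)).rank ≤ r := by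
    rw [← hE1]
    exact hrk a₀
  have hS : (P + Matrix.vecMulVec w w).rank + 1 ≤ r := by
    have hs := schur_step h2 (P := P) w
    have hr := hrk (a₀ + 1)
    rw [hE2] at hr
    omega
  have hkey := key h2 P hP u C
  rw [← hw] at hkey
  omega
end

section
/- Let K be a field of characteristic different from 2, and let n and s be non-negative integers with 2s ≤ n. Let 𝒮 be a non-empty affine subspace of the space of n×n symmetric matrices over K, and let S denote its translation vector space (direction). Assume that for every linear hyperplane H of Kⁿ, the subspace S_H = {N ∈ S : XᵀNY = 0 for all X, Y ∈ H} has dimension at least s. Then 𝒮 contains a matrix of rank at least 2s. -/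
open Matrix Module Submodule LinearMap

namespace Stmt8Aux

variable {K : Type*} [Field K] {n : ℕ}

/-- dot with all vectors zero implies zero -/
theorem dot_eq_zero_all {x : Fin n → K} (h : ∀ y, y ⬝ᵥ x = 0) : x = 0 := by
  funext i
  have := h (Pi.single i 1)
  rwa [single_dotProduct, one_mul] at this

/-- dot product as a map to the dual -/
noncomputable def toDualDot : (Fin n → K) →ₗ[K] Module.Dual K (Fin n → K) where
  toFun x :=
    { toFun := fun y => x ⬝ᵥ y
      map_add' := fun a b => dotProduct_add x a b
      map_smul' := fun c a => by simp [dotProduct_smul] }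
  map_add' a b := by ext y; simp [add_dotProduct]
  map_smul' c a := by ext y; simp [smul_dotProduct]

@[simp] theorem toDualDot_apply (x y : Fin n → K) : toDualDot x y = x ⬝ᵥ y := rfl

theorem toDualDot_inj : Function.Injective (toDualDot (K := K) (n := n)) := by
  rw [← LinearMap.ker_eq_bot, eq_bot_iff]
  intro x hx
  have : ∀ y, y ⬝ᵥ x = 0 := by
    intro y
    have := LinearMap.congr_fun (LinearMap.mem_ker.mp hx) y
    simpa [dotProduct_comm] using this
  simpa [Submodule.mem_bot] using dot_eq_zero_all this

theorem toDualDot_surj : Function.Surjective (toDualDot (K := K) (n := n)) := by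
  rw [← LinearMap.range_eq_top]
  apply Submodule.eq_top_of_finrank_eq
  rw [LinearMap.finrank_range_of_inj toDualDot_inj, Module.finrank_pi,
    Subspace.dual_finrank_eq, Module.finrank_pi]

/-- perp of a submodule wrt dot product -/
def perp (U : Submodule K (Fin n → K)) : Submodule K (Fin n → K) where
  carrier := {x | ∀ u ∈ U, u ⬝ᵥ x = 0}
  add_mem' := by intro a b ha hb u hu; rw [dotProduct_add, ha u hu, hb u hu, add_zero]
  zero_mem' := by intro u hu; rw [dotProduct_zero]
  smul_mem' := by intro c a ha u hu; rw [dotProduct_smul, ha u hu, smul_zero]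

theorem mem_perp {U : Submodule K (Fin n → K)} {x : Fin n → K} :
    x ∈ perp U ↔ ∀ u ∈ U, u ⬝ᵥ x = 0 := Iff.rfl

theorem finrank_add_finrank_perp (U : Submodule K (Fin n → K)) :
    finrank K U + finrank K (perp U) = n := by
  have hperp : perp U = U.dualAnnihilator.comap (toDualDot (K := K) (n := n)) := by
    ext x
    simp only [mem_perp, Submodule.mem_comap, Submodule.mem_dualAnnihilator, toDualDot_apply]
    constructor
    · intro h u hu; rw [dotProduct_comm]; exact h u hu
    · intro h u hu; rw [dotProduct_comm]; exact h u hu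
  let e : (Fin n → K) ≃ₗ[K] Module.Dual K (Fin n → K) :=
    LinearEquiv.ofBijective toDualDot ⟨toDualDot_inj, toDualDot_surj⟩
  have h1 : finrank K (perp U) = finrank K U.dualAnnihilator := by
    rw [hperp]
    exact (e.ofSubmodule' U.dualAnnihilator).finrank_eq
  rw [h1]
  have h2 : finrank K ((Fin n → K) ⧸ U) = finrank K U.dualAnnihilator :=
    (Subspace.quotEquivAnnihilator U).finrank_eq
  have h3 := Submodule.finrank_quotient_add_finrank U
  rw [Module.finrank_pi, Fintype.card_fin] at h3
  omega

/-- finrank of comap of subtype -/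
theorem finrank_comap_subtype {V : Type*} [AddCommGroup V] [Module K V]
    (p q : Submodule K V) :
    finrank K (q.comap p.subtype) = finrank K (p ⊓ q : Submodule K V) := by
  have h : q.comap p.subtype = (p ⊓ q).comap p.subtype := by
    ext ⟨x, hx⟩
    simp [Submodule.mem_comap, hx]
  rw [h, inf_comm]
  exact (Submodule.comapSubtypeEquivOfLe (inf_le_right : q ⊓ p ≤ p)).finrank_eq

end Stmt8Aux

open Stmt8Aux

section Main

variable {K : Type*} [Field K]

/-- symmetric dot swap -/
theorem symm_dot {n : ℕ} {A : Matrix (Fin n) (Fin n) K} (hA : A.IsSymm)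
    (a b : Fin n → K) : a ⬝ᵥ A *ᵥ b = b ⬝ᵥ A *ᵥ a := by
  rw [Matrix.dotProduct_mulVec]
  nth_rewrite 1 [← hA]
  rw [Matrix.vecMul_transpose, dotProduct_comm]

end Main

def matHyp {K : Type*} [Field K] {n : ℕ} (D : Submodule K (Matrix (Fin n) (Fin n) K))
    (H : Submodule K (Fin n → K)) : Submodule K (Matrix (Fin n) (Fin n) K) where
  carrier := {N | N ∈ D ∧ ∀ X ∈ H, ∀ Y ∈ H, X ⬝ᵥ N *ᵥ Y = 0}
  add_mem' := by
    rintro a b ⟨haD, ha⟩ ⟨hbD, hb⟩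
    refine ⟨D.add_mem haD hbD, fun X hX Y hY => ?_⟩
    rw [Matrix.add_mulVec, dotProduct_add, ha X hX Y hY, hb X hX Y hY, add_zero]
  zero_mem' := by
    refine ⟨D.zero_mem, fun X hX Y hY => ?_⟩
    rw [Matrix.zero_mulVec, dotProduct_zero]
  smul_mem' := by
    rintro c a ⟨haD, ha⟩
    refine ⟨D.smul_mem c haD, fun X hX Y hY => ?_⟩
    rw [Matrix.smul_mulVec, dotProduct_smul, ha X hX Y hY, smul_zero]

set_option maxHeartbeats 1000000 in
/-- Over a field of characteristic not 2: if `𝒮` is a nonempty affine subspace of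
symmetric `n × n` matrices whose direction `S` satisfies `dim S_H ≥ s` for every linear
hyperplane `H` of `Kⁿ`, then `𝒮` contains a matrix of rank at least `2s`. -/
theorem stmt8 {K : Type*} [Field K] (hchar : ringChar K ≠ 2) (n s : ℕ) (hs : 2 * s ≤ n)
    (𝒮 : AffineSubspace K (Matrix (Fin n) (Fin n) K)) (hne : (𝒮 : Set (Matrix (Fin n) (Fin n) K)).Nonempty)
    (hsymm : ∀ M ∈ 𝒮, M.IsSymm)
    (hdim : ∀ H : Submodule K (Fin n → K), IsCoatom H →
      s ≤ Module.finrank K (matHyp 𝒮.direction H)) :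
    ∃ M ∈ 𝒮, 2 * s ≤ M.rank := by
  classical
  by_contra hcon
  push_neg at hcon
  obtain ⟨M₀, hM₀⟩ := hne
  -- maximal rank element
  have hbdd : BddAbove ((fun M : Matrix (Fin n) (Fin n) K => M.rank) '' (𝒮 : Set _)) := by
    refine ⟨n, ?_⟩
    rintro _ ⟨A, _, rfl⟩
    simpa using A.rank_le_width
  have hrmem := Nat.sSup_mem (s := (fun M : Matrix (Fin n) (Fin n) K => M.rank) '' (𝒮 : Set _))
    ⟨M₀.rank, ⟨M₀, hM₀, rfl⟩⟩ hbdd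
  set r := sSup ((fun M : Matrix (Fin n) (Fin n) K => M.rank) '' (𝒮 : Set _)) with hrdef
  obtain ⟨M, hM, hMr⟩ := hrmem
  have hmax : ∀ P ∈ 𝒮, P.rank ≤ r := fun P hP => le_csSup hbdd ⟨P, hP, rfl⟩
  have hr2s : r < 2 * s := hMr ▸ hcon M hM
  have hs1 : 1 ≤ s := by omega
  have hrn : r < n := by omega
  have hMsymm := hsymm M hM
  -- the direction consists of symmetric matrices
  have hSsymm : ∀ N ∈ 𝒮.direction, N.IsSymm := by
    intro N hN
    rw [AffineSubspace.mem_direction_iff_eq_vsub ⟨M, hM⟩] at hN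
    obtain ⟨a, ha, b, hb, rfl⟩ := hN
    exact (hsymm a ha).sub (hsymm b hb)
  set LM := M.mulVecLin with hLM
  have hrank_eq : Module.finrank K (LinearMap.range LM) = r := hMr
  -- v outside the range
  have hv : ∃ v, v ∉ LinearMap.range LM := by
    by_contra hva
    push_neg at hva
    have : LinearMap.range LM = ⊤ := Submodule.eq_top_iff'.mpr hva
    rw [this, finrank_top, Module.finrank_pi, Fintype.card_fin] at hrank_eq
    omega
  obtain ⟨v, hv⟩ := hv
  have hv0 : v ≠ 0 := fun h => hv (h ▸ (LinearMap.range LM).zero_mem)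
  obtain ⟨i, hvi⟩ : ∃ i, v i ≠ 0 := by
    by_contra hvv
    push_neg at hvv
    exact hv0 (funext hvv)
  set z : Fin n → K := (v i)⁻¹ • (Pi.single i 1 : Fin n → K) with hzdef
  have hvz : v ⬝ᵥ z = 1 := by
    rw [hzdef, dotProduct_smul, dotProduct_single, mul_one, smul_eq_mul]
    field_simp
  -- the hyperplane
  set f : (Fin n → K) →ₗ[K] K :=
    { toFun := fun y => v ⬝ᵥ y
      map_add' := fun a b => dotProduct_add v a b
      map_smul' := fun c a => by simp [dotProduct_smul] } with hfdef
  set H := LinearMap.ker f with hHdef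
  have hmemH : ∀ y, y ∈ H ↔ v ⬝ᵥ y = 0 := fun y => LinearMap.mem_ker
  have hzH : z ∉ H := by rw [hmemH, hvz]; exact one_ne_zero
  have hHco : IsCoatom H := by
    constructor
    · intro htop
      exact hzH (htop ▸ Submodule.mem_top)
    · intro b hlt
      obtain ⟨w, hwb, hwH⟩ := SetLike.exists_of_lt hlt
      have hfw : v ⬝ᵥ w ≠ 0 := fun h => hwH ((hmemH w).mpr h)
      rw [Submodule.eq_top_iff']
      intro y
      have hyH : y - ((v ⬝ᵥ y) / (v ⬝ᵥ w)) • w ∈ H := by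
        rw [hmemH, dotProduct_sub, dotProduct_smul, smul_eq_mul]
        field_simp
        ring
      have : y = (y - ((v ⬝ᵥ y) / (v ⬝ᵥ w)) • w) + ((v ⬝ᵥ y) / (v ⬝ᵥ w)) • w := by ring_nf
      rw [this]
      exact b.add_mem (hlt.le hyH) (b.smul_mem _ hwb)
  set SH := matHyp 𝒮.direction H with hSHdef
  have hsSH : s ≤ Module.finrank K SH := hdim H hHco
  set spanv := Submodule.span K {v} with hspanvdef
  have hvmem : v ∈ spanv := Submodule.mem_span_singleton_self v
  have hspan_range : ∀ a : K, a • v ∈ LinearMap.range LM → a = 0 := by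
    intro a ha
    by_contra ha0
    exact hv (by simpa [smul_smul, inv_mul_cancel₀ ha0] using
      (LinearMap.range LM).smul_mem a⁻¹ ha)
  -- membership in spanv from orthogonality to H
  have hperpH : ∀ u : Fin n → K, (∀ X ∈ H, X ⬝ᵥ u = 0) → u ∈ spanv := by
    intro u hu
    have key : u - (z ⬝ᵥ u) • v = 0 := by
      apply dot_eq_zero_all
      intro y
      have hy' : y - (v ⬝ᵥ y) • z ∈ H := by
        rw [hmemH, dotProduct_sub, dotProduct_smul, hvz, smul_eq_mul, mul_one, sub_self]
      have h1 : (y - (v ⬝ᵥ y) • z) ⬝ᵥ u = 0 := hu _ hy'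
      rw [sub_dotProduct, smul_dotProduct, smul_eq_mul] at h1
      rw [dotProduct_sub, dotProduct_smul, smul_eq_mul]
      linear_combination h1 - (z ⬝ᵥ u) * dotProduct_comm y v
    rw [Submodule.mem_span_singleton]
    exact ⟨z ⬝ᵥ u, by linear_combination -key⟩
  -- claim (i): elements of SH map H into spanv
  have hNH : ∀ N, N ∈ SH → ∀ y ∈ H, N *ᵥ y ∈ spanv := by
    intro N hN y hy
    exact hperpH _ (fun X hX => hN.2 X hX y hy)
  -- quotient by spanv
  set π := spanv.mkQ with hπdef
  set Φ := π ∘ₗ (LM ∘ₗ H.subtype) with hΦdef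
  set B := LinearMap.range Φ with hBdef
  -- dimension facts
  have hfH : Module.finrank K H + 1 = n := by
    have h1 := LinearMap.finrank_range_add_finrank_ker f
    have hrf : LinearMap.range f = ⊤ := by
      rw [LinearMap.range_eq_top]
      intro c
      exact ⟨c • z, by simp [hfdef, dotProduct_smul, hvz]⟩
    rw [hrf, finrank_top, Module.finrank_self, Module.finrank_pi, Fintype.card_fin] at h1
    rw [← hHdef] at h1
    omega
  have hkerM : Module.finrank K (LinearMap.ker LM) + r = n := by
    have h1 := LinearMap.finrank_range_add_finrank_ker LM
    rw [hrank_eq, Module.finrank_pi, Fintype.card_fin] at h1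
    omega
  -- perp(range LM) facts : the kernel is not inside H
  have hker_nle : ¬ (LinearMap.ker LM ≤ H) := by
    intro hle
    have hrange_perp : LinearMap.range LM = perp (LinearMap.ker LM) := by
      apply Submodule.eq_of_le_of_finrank_le
      · rintro _ ⟨y, rfl⟩
        intro u hu
        have hu0 : M *ᵥ u = 0 := hu
        rw [Matrix.mulVecLin_apply, symm_dot hMsymm, hu0, dotProduct_zero]
      · have := finrank_add_finrank_perp (LinearMap.ker LM)
        omega
    apply hv
    rw [hrange_perp]
    intro u hu
    have : v ⬝ᵥ u = 0 := (hmemH u).mp (hle hu)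
    rw [dotProduct_comm]; exact this
  obtain ⟨k₀, hk₀ker, hk₀H⟩ : ∃ k₀, k₀ ∈ LinearMap.ker LM ∧ k₀ ∉ H := by
    by_contra hc
    push_neg at hc
    exact hker_nle hc
  have hkerH : Module.finrank K ((LinearMap.ker LM) ⊓ H : Submodule K (Fin n → K)) + 1
      = Module.finrank K (LinearMap.ker LM) := by
    set f' := f ∘ₗ (LinearMap.ker LM).subtype with hf'def
    have h1 := LinearMap.finrank_range_add_finrank_ker f'
    have hrf' : LinearMap.range f' = ⊤ := by
      rw [LinearMap.range_eq_top]
      intro c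
      refine ⟨⟨(c / (v ⬝ᵥ k₀)) • k₀, Submodule.smul_mem _ _ hk₀ker⟩, ?_⟩
      have hk0 : v ⬝ᵥ k₀ ≠ 0 := fun h => hk₀H ((hmemH k₀).mpr h)
      simp only [hf'def, LinearMap.comp_apply, Submodule.coe_subtype]
      show v ⬝ᵥ ((c / (v ⬝ᵥ k₀)) • k₀) = c
      rw [dotProduct_smul, smul_eq_mul]
      field_simp
    have hkf' : LinearMap.ker f' = H.comap (LinearMap.ker LM).subtype := by
      rw [hf'def, LinearMap.ker_comp, hHdef]
    rw [hrf', finrank_top, Module.finrank_self, hkf', finrank_comap_subtype] at h1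
    omega
  have hB : Module.finrank K B = r := by
    have h1 := LinearMap.finrank_range_add_finrank_ker Φ
    have hkerΦ : LinearMap.ker Φ = (LinearMap.ker LM).comap H.subtype := by
      ext x
      simp only [LinearMap.mem_ker, Submodule.mem_comap, hΦdef, LinearMap.comp_apply,
        Submodule.coe_subtype, hπdef, Submodule.mkQ_apply]
      rw [Submodule.Quotient.mk_eq_zero]
      constructor
      · intro hx
        obtain ⟨a, ha⟩ := Submodule.mem_span_singleton.mp hx
        have : a = 0 := hspan_range a (ha.symm ▸ ⟨x.1, rfl⟩)
        rw [this, zero_smul] at ha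
        exact ha.symm
      · intro hx
        rw [hx]
        exact Submodule.zero_mem _
    rw [hkerΦ, finrank_comap_subtype, ← hBdef, inf_comm] at h1
    omega
  -- P = M + N facts
  have hPmem : ∀ N, N ∈ SH → M + N ∈ 𝒮 := by
    intro N hN
    have := AffineSubspace.vadd_mem_of_mem_direction hN.1 hM
    simpa [vadd_eq_add, add_comm] using this
  have hrkP : ∀ N, N ∈ SH → Module.finrank K (LinearMap.range (M + N).mulVecLin) ≤ r :=
    fun N hN => hmax (M + N) (hPmem N hN)
  have hBleP : ∀ N, N ∈ SH →
      B ≤ Submodule.map π (LinearMap.range (M + N).mulVecLin) := by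
    intro N hN
    rintro b ⟨h, rfl⟩
    refine ⟨(M + N) *ᵥ h.1, ⟨h.1, rfl⟩, ?_⟩
    have hdiff : (M + N) *ᵥ h.1 - M *ᵥ h.1 ∈ spanv := by
      have : (M + N) *ᵥ h.1 - M *ᵥ h.1 = N *ᵥ h.1 := by
        rw [Matrix.add_mulVec]; abel
      rw [this]
      exact hNH N hN h.1 h.2
    show π ((M + N) *ᵥ h.1) = Φ h
    have : Φ h = π (M *ᵥ h.1) := rfl
    rw [this, hπdef]
    rw [Submodule.mkQ_apply, Submodule.mkQ_apply, Submodule.Quotient.eq]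
    exact hdiff
  -- Lemma A
  have lemA : ∀ N, N ∈ SH → ∃ u, u ∈ H ∧ (M + N) *ᵥ z - M *ᵥ u ∈ spanv := by
    intro N hN
    set ψ := π ∘ₗ (M + N).mulVecLin with hψdef
    have hrψ : LinearMap.range ψ = Submodule.map π (LinearMap.range (M + N).mulVecLin) := by
      rw [hψdef, LinearMap.range_comp]
    have hψle : Module.finrank K (LinearMap.range ψ) ≤ r := by
      rw [hrψ]
      exact le_trans (Submodule.finrank_map_le π _) (hrkP N hN)
    have hBψ : B = LinearMap.range ψ := by
      apply Submodule.eq_of_le_of_finrank_le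
      · rw [hrψ]; exact hBleP N hN
      · rw [hB]; exact hψle
    have : ψ z ∈ B := hBψ ▸ ⟨z, rfl⟩
    rw [hBdef] at this
    obtain ⟨h, hh⟩ := this
    refine ⟨h.1, h.2, ?_⟩
    have : π (M *ᵥ h.1) = π ((M + N) *ᵥ z) := hh
    rw [hπdef, Submodule.mkQ_apply, Submodule.mkQ_apply, Submodule.Quotient.eq] at this
    simpa using Submodule.neg_mem _ this
  -- Lemma B
  have lemB : ∀ N, N ∈ SH → ∀ u, u ∈ H → ((M + N) *ᵥ z - M *ᵥ u ∈ spanv) →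
      z ⬝ᵥ ((M + N) *ᵥ z) = u ⬝ᵥ (M *ᵥ u) := by
    intro N hN u hu hcond
    by_contra hne'
    have hPsym : (M + N).IsSymm := hMsymm.add (hSsymm N hN.1)
    have hNu : N *ᵥ u ∈ spanv := hNH N hN u hu
    have hPξ : (M + N) *ᵥ (z - u) ∈ spanv := by
      have hexp : (M + N) *ᵥ (z - u) = ((M + N) *ᵥ z - M *ᵥ u) - N *ᵥ u := by
        simp only [Matrix.mulVec_sub, Matrix.add_mulVec]; abel
      rw [hexp]
      exact Submodule.sub_mem _ hcond hNu
    obtain ⟨c, hc⟩ := Submodule.mem_span_singleton.mp hPξ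
    have hzPu : z ⬝ᵥ ((M + N) *ᵥ u) = u ⬝ᵥ (M *ᵥ u) := by
      rw [symm_dot hPsym]
      obtain ⟨a, ha⟩ := Submodule.mem_span_singleton.mp hcond
      have huv : u ⬝ᵥ v = 0 := by rw [dotProduct_comm]; exact (hmemH u).mp hu
      have : (M + N) *ᵥ z = M *ᵥ u + a • v := by rw [ha]; abel
      rw [this, dotProduct_add, dotProduct_smul, huv, smul_eq_mul, mul_zero, add_zero]
    have hzPξ : z ⬝ᵥ ((M + N) *ᵥ (z - u)) ≠ 0 := by
      rw [Matrix.mulVec_sub, dotProduct_sub, hzPu]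
      exact sub_ne_zero_of_ne hne'
    have hc0 : c ≠ 0 := by
      intro h0
      rw [h0, zero_smul] at hc
      rw [← hc, dotProduct_zero] at hzPξ
      exact hzPξ rfl
    have hvrange : v ∈ LinearMap.range (M + N).mulVecLin := by
      have : v = c⁻¹ • ((M + N) *ᵥ (z - u)) := by
        rw [← hc, smul_smul, inv_mul_cancel₀ hc0, one_smul]
      rw [this]
      exact Submodule.smul_mem _ _ ⟨z - u, rfl⟩
    -- rank at least r+1, contradiction
    set π' := π ∘ₗ (LinearMap.range (M + N).mulVecLin).subtype with hπ'def
    have h1 := LinearMap.finrank_range_add_finrank_ker π'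
    have hrπ' : LinearMap.range π' = Submodule.map π (LinearMap.range (M + N).mulVecLin) := by
      rw [hπ'def, LinearMap.range_comp, Submodule.range_subtype]
    have hge1 : Module.finrank K B ≤ Module.finrank K (LinearMap.range π') := by
      rw [hrπ']
      exact Submodule.finrank_mono (hBleP N hN)
    have hvk : π' ⟨v, hvrange⟩ = 0 := by
      have he : π' ⟨v, hvrange⟩ = π v := rfl
      rw [he, hπdef, Submodule.mkQ_apply, Submodule.Quotient.mk_eq_zero]
      exact hvmem
    have hker1 : 0 < Module.finrank K (LinearMap.ker π') := by
      refine (Module.finrank_pos_iff (R := K) (M := LinearMap.ker π')).mpr ?_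
      refine nontrivial_of_ne ⟨⟨v, hvrange⟩, hvk⟩ 0 ?_
      intro h0
      apply hv0
      have h2 := congrArg
        (fun x : (LinearMap.ker π') => ((x : LinearMap.range (M + N).mulVecLin) : Fin n → K)) h0
      simpa only [ZeroMemClass.coe_zero] using h2
    rw [hB] at hge1
    have := hrkP N hN
    omega
  -- base point u₀ from N = 0
  obtain ⟨u₀, hu₀H, hu₀cond⟩ := lemA 0 (Submodule.zero_mem SH)
  have hMz : M *ᵥ z - M *ᵥ u₀ ∈ spanv := by
    have : (M + 0) *ᵥ z - M *ᵥ u₀ = M *ᵥ z - M *ᵥ u₀ := by rw [add_zero]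
    rwa [this] at hu₀cond
  have hzv : z ⬝ᵥ v = 1 := by rw [dotProduct_comm]; exact hvz
  -- char ≠ 2
  have h2K : (2 : K) ≠ 0 := by
    intro h2
    haveI := ringChar.charP K
    have hdvd : ringChar K ∣ 2 := by
      have := (CharP.cast_eq_zero_iff K (ringChar K) 2).mpr
      exact (CharP.cast_eq_zero_iff K (ringChar K) 2).mp (by exact_mod_cast h2)
    rcases (Nat.dvd_prime Nat.prime_two).mp hdvd with h1 | h1
    · have : ((1 : ℕ) : K) = 0 := (CharP.cast_eq_zero_iff K (ringChar K) 1).mpr (h1 ▸ dvd_refl _)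
      rw [Nat.cast_one] at this
      exact one_ne_zero this
    · exact hchar h1
  -- Lemma C : isotropy
  have lemC : ∀ N, N ∈ SH → ∀ N', N' ∈ SH → ∀ u u', u ∈ H → u' ∈ H →
      ((M + N) *ᵥ z - M *ᵥ u ∈ spanv) → ((M + N') *ᵥ z - M *ᵥ u' ∈ spanv) →
      (u - u₀) ⬝ᵥ (M *ᵥ (u' - u₀)) = 0 := by
    intro N hN N' hN' u u' hu hu' hcond hcond'
    have e1 := lemB N hN u hu hcond
    have e2 := lemB N' hN' u' hu' hcond'
    have e3 := lemB 0 (Submodule.zero_mem SH) u₀ hu₀H hu₀cond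
    have hsum : N + N' ∈ SH := Submodule.add_mem SH hN hN'
    have humem : u + u' - u₀ ∈ H := Submodule.sub_mem H (Submodule.add_mem H hu hu') hu₀H
    have hcond'' : (M + (N + N')) *ᵥ z - M *ᵥ (u + u' - u₀) ∈ spanv := by
      have hexp : (M + (N + N')) *ᵥ z - M *ᵥ (u + u' - u₀) =
          ((M + N) *ᵥ z - M *ᵥ u) + (((M + N') *ᵥ z - M *ᵥ u')
            - ((M + 0) *ᵥ z - M *ᵥ u₀)) := by
        simp only [Matrix.add_mulVec, Matrix.mulVec_add, Matrix.mulVec_sub,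
          Matrix.zero_mulVec]
        abel
      rw [hexp]
      exact Submodule.add_mem _ hcond (Submodule.sub_mem _ hcond' hu₀cond)
    have e4 := lemB (N + N') hsum (u + u' - u₀) humem hcond''
    have s1 : u' ⬝ᵥ (M *ᵥ u) = u ⬝ᵥ (M *ᵥ u') := symm_dot hMsymm u' u
    have s2 : u₀ ⬝ᵥ (M *ᵥ u) = u ⬝ᵥ (M *ᵥ u₀) := symm_dot hMsymm u₀ u
    have s3 : u₀ ⬝ᵥ (M *ᵥ u') = u' ⬝ᵥ (M *ᵥ u₀) := symm_dot hMsymm u₀ u'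
    simp only [Matrix.add_mulVec, Matrix.mulVec_add, Matrix.mulVec_sub, Matrix.zero_mulVec,
      dotProduct_add, dotProduct_sub, add_dotProduct, sub_dotProduct, dotProduct_zero,
      add_zero, zero_add] at e1 e2 e3 e4 ⊢
    have key : (2 : K) * (u ⬝ᵥ (M *ᵥ u') - u ⬝ᵥ (M *ᵥ u₀) - u₀ ⬝ᵥ (M *ᵥ u')
        + u₀ ⬝ᵥ (M *ᵥ u₀)) = 0 := by
      linear_combination e1 + e2 - e3 - e4 - s1 + s2 - s3
    rcases mul_eq_zero.mp key with h | h
    · exact absurd h h2K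
    · linear_combination h
  -- the injection J
  set J : SH →ₗ[K] (Fin n → K) :=
    { toFun := fun N => (N : Matrix (Fin n) (Fin n) K) *ᵥ z
      map_add' := fun a b => by simp [Matrix.add_mulVec]
      map_smul' := fun c a => by simp [Matrix.smul_mulVec] } with hJdef
  have hJapp : ∀ N : SH, J N = (N : Matrix (Fin n) (Fin n) K) *ᵥ z := fun _ => rfl
  have hJinj : Function.Injective J := by
    rw [← LinearMap.ker_eq_bot, eq_bot_iff]
    rintro N hNk
    have hNz : (N : Matrix (Fin n) (Fin n) K) *ᵥ z = 0 := hNk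
    have hNy : ∀ y ∈ H, (N : Matrix (Fin n) (Fin n) K) *ᵥ y = 0 := by
      intro y hy
      obtain ⟨a, ha⟩ := Submodule.mem_span_singleton.mp (hNH N.1 N.2 y hy)
      have hz0 : z ⬝ᵥ ((N : Matrix (Fin n) (Fin n) K) *ᵥ y) = 0 := by
        rw [symm_dot (hSsymm N.1 N.2.1), hNz, dotProduct_zero]
      rw [← ha, dotProduct_smul, hzv, smul_eq_mul, mul_one] at hz0
      rw [← ha, hz0, zero_smul]
    have hNall : ∀ y, (N : Matrix (Fin n) (Fin n) K) *ᵥ y = 0 := by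
      intro y
      have hy' : y - (v ⬝ᵥ y) • z ∈ H := by
        rw [hmemH, dotProduct_sub, dotProduct_smul, hvz, smul_eq_mul, mul_one, sub_self]
      have h0 := hNy _ hy'
      rw [Matrix.mulVec_sub, Matrix.mulVec_smul, hNz, smul_zero, sub_zero] at h0
      exact h0
    have hNzero : (N : Matrix (Fin n) (Fin n) K) = 0 := by
      ext i' j
      have := congrFun (hNall (Pi.single j 1)) i'
      rw [Matrix.mulVec_single] at this
      simpa using this
    exact (Submodule.mem_bot K).mpr
      (Subtype.ext (hNzero.trans (ZeroMemClass.coe_zero SH).symm))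
  set W := LinearMap.range J with hWdef
  have hWrank : Module.finrank K SH = Module.finrank K W :=
    (LinearMap.finrank_range_of_inj hJinj).symm
  -- the isotropic-ish subspace
  set Y₀ : Submodule K (Fin n → K) := H ⊓ Submodule.comap LM (W ⊔ spanv) with hY₀def
  -- F1 : isotropy on Y₀
  have F1 : ∀ y ∈ Y₀, ∀ y' ∈ Y₀, y ⬝ᵥ (M *ᵥ y') = 0 := by
    have mkcond : ∀ y ∈ Y₀, ∃ N : SH, (M + (N : Matrix (Fin n) (Fin n) K)) *ᵥ z
        - M *ᵥ (y + u₀) ∈ spanv := by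
      intro y hy
      obtain ⟨hyH, hyc⟩ := Submodule.mem_inf.mp hy
      obtain ⟨w, hw, c, hc, hsum⟩ := Submodule.mem_sup.mp (Submodule.mem_comap.mp hyc)
      obtain ⟨N, rfl⟩ := hw
      obtain ⟨a, ha⟩ := Submodule.mem_span_singleton.mp hc
      refine ⟨N, ?_⟩
      have heq : (N : Matrix (Fin n) (Fin n) K) *ᵥ z + a • v = M *ᵥ y := by
        rw [ha]
        exact hsum
      have hexp : (M + (N : Matrix (Fin n) (Fin n) K)) *ᵥ z - M *ᵥ (y + u₀)
          = (M *ᵥ z - M *ᵥ u₀) - a • v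
          + (((N : Matrix (Fin n) (Fin n) K) *ᵥ z + a • v) - M *ᵥ y) := by
        simp only [Matrix.add_mulVec, Matrix.mulVec_add]
        abel
      rw [hexp, heq, sub_self, add_zero]
      exact Submodule.sub_mem _ hMz (Submodule.smul_mem _ _ hvmem)
    intro y hy y' hy'
    obtain ⟨N, hcondy⟩ := mkcond y hy
    obtain ⟨N', hcondy'⟩ := mkcond y' hy'
    have hyH := (Submodule.mem_inf.mp hy).1
    have hy'H := (Submodule.mem_inf.mp hy').1
    have := lemC N.1 N.2 N'.1 N'.2 (y + u₀) (y' + u₀)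
      (Submodule.add_mem H hyH hu₀H) (Submodule.add_mem H hy'H hu₀H) hcondy hcondy'
    simpa [add_sub_cancel_right] using this
  -- F2 : W is inside M(Y₀) + spanv
  have F2 : W ≤ (Submodule.map LM Y₀) ⊔ spanv := by
    rintro w ⟨N, rfl⟩
    obtain ⟨u, huH, hcond⟩ := lemA N.1 N.2
    have hyH : u - u₀ ∈ H := Submodule.sub_mem H huH hu₀H
    have hMyNz : M *ᵥ (u - u₀) - (N : Matrix (Fin n) (Fin n) K) *ᵥ z ∈ spanv := by
      have hexp : M *ᵥ (u - u₀) - (N : Matrix (Fin n) (Fin n) K) *ᵥ z =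
          (M *ᵥ z - M *ᵥ u₀) - ((M + (N : Matrix (Fin n) (Fin n) K)) *ᵥ z - M *ᵥ u) := by
        simp only [Matrix.mulVec_sub, Matrix.add_mulVec]
        abel
      rw [hexp]
      exact Submodule.sub_mem _ hMz hcond
    obtain ⟨a, ha⟩ := Submodule.mem_span_singleton.mp hMyNz
    have hyY : u - u₀ ∈ Y₀ := by
      refine Submodule.mem_inf.mpr ⟨hyH, Submodule.mem_comap.mpr ?_⟩
      refine Submodule.mem_sup.mpr ⟨(N : Matrix (Fin n) (Fin n) K) *ᵥ z, ⟨N, rfl⟩,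
        a • v, Submodule.smul_mem _ _ hvmem, ?_⟩
      rw [ha]
      show (N : Matrix (Fin n) (Fin n) K) *ᵥ z
        + (M *ᵥ (u - u₀) - (N : Matrix (Fin n) (Fin n) K) *ᵥ z) = M *ᵥ (u - u₀)
      abel
    refine Submodule.mem_sup.mpr ⟨M *ᵥ (u - u₀), ⟨u - u₀, hyY, rfl⟩,
      -(a • v), Submodule.neg_mem _ (Submodule.smul_mem _ _ hvmem), ?_⟩
    have : a • v = M *ᵥ (u - u₀) - (N : Matrix (Fin n) (Fin n) K) *ᵥ z := ha
    show M *ᵥ (u - u₀) + -(a • v) = (N : Matrix (Fin n) (Fin n) K) *ᵥ z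
    rw [this]
    abel
  -- F3 : W ∩ spanv = 0
  have F3 : W ⊓ spanv = ⊥ := by
    rw [eq_bot_iff]
    rintro x hx
    obtain ⟨hxW, hxv⟩ := Submodule.mem_inf.mp hx
    obtain ⟨N, rfl⟩ := hxW
    obtain ⟨a, ha⟩ := Submodule.mem_span_singleton.mp hxv
    have ha' : a • v = (N : Matrix (Fin n) (Fin n) K) *ᵥ z := ha
    obtain ⟨u, huH, hcond⟩ := lemA N.1 N.2
    have hcond0 : (M + 0) *ᵥ z - M *ᵥ u ∈ spanv := by
      have hexp : (M + 0) *ᵥ z - M *ᵥ u =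
          ((M + (N : Matrix (Fin n) (Fin n) K)) *ᵥ z - M *ᵥ u)
          - (N : Matrix (Fin n) (Fin n) K) *ᵥ z := by
        simp only [Matrix.add_mulVec, Matrix.zero_mulVec]
        abel
      rw [hexp]
      refine Submodule.sub_mem _ hcond ?_
      rw [← ha']
      exact Submodule.smul_mem _ _ hvmem
    have e0 := lemB 0 (Submodule.zero_mem SH) u huH hcond0
    have eN := lemB N.1 N.2 u huH hcond
    have hzNz : z ⬝ᵥ ((N : Matrix (Fin n) (Fin n) K) *ᵥ z) = 0 := by
      simp only [Matrix.add_mulVec, Matrix.zero_mulVec, dotProduct_add, dotProduct_zero,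
        add_zero] at e0 eN
      linear_combination eN - e0
    have ha0 : a = 0 := by
      rw [← ha', dotProduct_smul, hzv, smul_eq_mul, mul_one] at hzNz
      exact hzNz
    have hJ0 : J N = 0 := by
      rw [← ha, ha0, zero_smul]
    rw [hJ0]
    exact Submodule.zero_mem ⊥
  -- F4 : the dimension bound
  set Z := Submodule.map LM Y₀ with hZdef
  have F4 : 2 * Module.finrank K Z ≤ r := by
    have hZperp : Z ≤ perp (Y₀ ⊔ LinearMap.ker LM) := by
      rintro ζ ⟨y, hyY, rfl⟩
      intro x hx
      obtain ⟨a, haY, k, hk, rfl⟩ := Submodule.mem_sup.mp hx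
      have h1 : a ⬝ᵥ (M *ᵥ y) = 0 := F1 a haY y hyY
      have h2 : k ⬝ᵥ (M *ᵥ y) = 0 := by
        rw [symm_dot hMsymm]
        have hk0 : M *ᵥ k = 0 := hk
        rw [hk0, dotProduct_zero]
      show (a + k) ⬝ᵥ (M *ᵥ y) = 0
      rw [add_dotProduct, h1, h2, add_zero]
    have d4 : Module.finrank K Z ≤ Module.finrank K (perp (Y₀ ⊔ LinearMap.ker LM)) :=
      Submodule.finrank_mono hZperp
    have d3 := finrank_add_finrank_perp (Y₀ ⊔ LinearMap.ker LM)
    have d1 := Submodule.finrank_sup_add_finrank_inf_eq Y₀ (LinearMap.ker LM)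
    have d2 : Module.finrank K Z
        + Module.finrank K (Y₀ ⊓ LinearMap.ker LM : Submodule K (Fin n → K))
        = Module.finrank K Y₀ := by
      set g := LM ∘ₗ Y₀.subtype with hgdef
      have h1 := LinearMap.finrank_range_add_finrank_ker g
      have hrg : LinearMap.range g = Z := by
        rw [hgdef, LinearMap.range_comp, Submodule.range_subtype]
      have hkg : LinearMap.ker g = (LinearMap.ker LM).comap Y₀.subtype := by
        rw [hgdef, LinearMap.ker_comp]
      rw [hrg, hkg, finrank_comap_subtype] at h1
      exact h1
    omega
  -- final contradiction
  have hspan1 : Module.finrank K spanv = 1 := finrank_span_singleton hv0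
  have e5 := Submodule.finrank_sup_add_finrank_inf_eq W spanv
  rw [F3, finrank_bot, hspan1] at e5
  have e6 : Module.finrank K (W ⊔ spanv : Submodule K (Fin n → K))
      ≤ Module.finrank K (Z ⊔ spanv : Submodule K (Fin n → K)) :=
    Submodule.finrank_mono (sup_le F2 le_sup_right)
  have e7 := Submodule.finrank_sup_add_finrank_inf_eq Z spanv
  rw [hspan1] at e7
  omega
end

section
/- Let K be an arbitrary field, and let n and s be non-negative integers with 2s ≤ n. Let 𝒮 be a non-empty affine subspace of the space of n×n alternating matrices over K, and let S denote its translation vector space. Assume that for every linear hyperplane H of Kⁿ, the subspace S_H = {N ∈ S : XᵀNY = 0 for all X, Y ∈ H} has dimension at least s. Then 𝒮 contains a matrix of rank at least 2s. -/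
open Matrix

section aux
variable {K : Type*} [Field K] {n : ℕ}
open Module

lemma entry_eq (M : Matrix (Fin n) (Fin n) K) (i j : Fin n) :
    (Pi.single i 1 : Fin n → K) ⬝ᵥ M *ᵥ (Pi.single j 1) = M i j := by
  simp [mulVec_single, single_dotProduct]

lemma alt_skew {M : Matrix (Fin n) (Fin n) K} (hM : ∀ x, x ⬝ᵥ M *ᵥ x = 0) (x y : Fin n → K) :
    x ⬝ᵥ M *ᵥ y = -(y ⬝ᵥ M *ᵥ x) := by
  have h := hM (x + y)
  simp only [mulVec_add, dotProduct_add, add_dotProduct, hM x, hM y] at h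
  linear_combination h

lemma alt_transpose {M : Matrix (Fin n) (Fin n) K} (hM : ∀ x, x ⬝ᵥ M *ᵥ x = 0) :
    Mᵀ = -M := by
  ext i j
  have h := alt_skew hM (Pi.single j 1) (Pi.single i 1)
  rw [entry_eq, entry_eq] at h
  simpa [Matrix.transpose_apply] using h

/-- the dot-product functional -/
def dotL (c : Fin n → K) : (Fin n → K) →ₗ[K] K where
  toFun y := c ⬝ᵥ y
  map_add' u v := by simp [dotProduct_add]
  map_smul' t u := by simp

@[simp] lemma dotL_apply (c y : Fin n → K) : dotL c y = c ⬝ᵥ y := rfl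

/-- every functional is a dot product -/
lemma exists_dot_repr (g : (Fin n → K) →ₗ[K] K) : ∃ v, ∀ y, g y = y ⬝ᵥ v := by
  refine ⟨fun i => g (Pi.single i 1), fun y => ?_⟩
  conv_lhs => rw [← Finset.univ_sum_single y]
  rw [map_sum]
  simp only [dotProduct]
  refine Finset.sum_congr rfl fun i _ => ?_
  have : (Pi.single i (y i) : Fin n → K) = y i • (Pi.single i 1 : Fin n → K) := by
    ext j
    by_cases h : j = i
    · subst h; simp
    · simp [Pi.single_eq_of_ne h]
  rw [this, _root_.map_smul, smul_eq_mul]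

/-- extend a functional on a subspace to a dot product -/
lemma exists_dot_extend (A : Submodule K (Fin n → K)) (f : Module.Dual K ↥A) :
    ∃ v, ∀ a : A, (a : Fin n → K) ⬝ᵥ v = f a := by
  obtain ⟨q, hq⟩ := Submodule.exists_isCompl A
  set g : (Fin n → K) →ₗ[K] K := f.comp (A.projectionOnto q hq)
  obtain ⟨v, hv⟩ := exists_dot_repr g
  refine ⟨v, fun a => ?_⟩
  rw [← hv a]
  simp [g, Submodule.projectionOnto_apply_left hq a]

/-- the "dual of A" map -/
def annL (A : Submodule K (Fin n → K)) : (Fin n → K) →ₗ[K] Module.Dual K ↥A where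
  toFun v := (dotL v).comp A.subtype
  map_add' u v := by ext a; simp [add_dotProduct]
  map_smul' t u := by ext a; simp [smul_dotProduct]

lemma annL_surjective (A : Submodule K (Fin n → K)) : Function.Surjective (annL A) := by
  intro f
  obtain ⟨v, hv⟩ := exists_dot_extend A f
  refine ⟨v, ?_⟩
  ext a
  simpa [annL, dotProduct_comm] using hv a

/-- dimension of the orthogonal of A -/
lemma finrank_ker_annL (A : Submodule K (Fin n → K)) :
    finrank K ↥(LinearMap.ker (annL A)) + finrank K ↥A = n := by
  have h := LinearMap.finrank_range_add_finrank_ker (annL A)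
  rw [LinearMap.range_eq_top.mpr (annL_surjective A)] at h
  rw [finrank_top] at h
  rw [Subspace.dual_finrank_eq] at h
  have hn : finrank K (Fin n → K) = n := by simp
  omega


lemma mem_ker_annL (A : Submodule K (Fin n → K)) (v : Fin n → K) :
    v ∈ LinearMap.ker (annL A) ↔ ∀ a ∈ A, a ⬝ᵥ v = 0 := by
  rw [LinearMap.mem_ker]
  constructor
  · intro hv a ha
    have h1 : annL A v ⟨a, ha⟩ = 0 := by rw [hv]; rfl
    have h2 : v ⬝ᵥ a = 0 := by simpa [annL] using h1
    rwa [dotProduct_comm] at h2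
  · intro hv
    ext a
    have := hv a a.2
    simpa [annL, dotProduct_comm] using this

lemma dot_ext {c d : Fin n → K} (h : ∀ x, c ⬝ᵥ x = d ⬝ᵥ x) : c = d := by
  funext i
  simpa [dotProduct_single] using h (Pi.single i 1)

/-- row space fact: if c kills ker M then c is in the range of Mᵀ; for skew M, range of M -/
lemma mem_range_of_perp_ker {M : Matrix (Fin n) (Fin n) K} (hM : Mᵀ = -M)
    {c : Fin n → K} (h : ∀ x, M *ᵥ x = 0 → c ⬝ᵥ x = 0) :
    c ∈ LinearMap.range M.mulVecLin := by
  have hle : LinearMap.ker M.mulVecLin ≤ LinearMap.ker (dotL c) := by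
    intro x hx
    simp only [LinearMap.mem_ker] at hx ⊢
    simpa using h x (by simpa using hx)
  -- functional on range
  set f : ↥(LinearMap.range M.mulVecLin) →ₗ[K] K :=
    ((LinearMap.ker M.mulVecLin).liftQ (dotL c) hle).comp
      (M.mulVecLin.quotKerEquivRange.symm : _ ≃ₗ[K] _).toLinearMap
  obtain ⟨u, hu⟩ := exists_dot_extend _ f
  have key : ∀ x, c ⬝ᵥ x = (M *ᵥ x) ⬝ᵥ u := by
    intro x
    have hmem : M *ᵥ x ∈ LinearMap.range M.mulVecLin := ⟨x, by simp⟩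
    have h1 : ((⟨M *ᵥ x, hmem⟩ : ↥(LinearMap.range M.mulVecLin)) : Fin n → K) ⬝ᵥ u
        = f ⟨M *ᵥ x, hmem⟩ := hu _
    have h2 : f ⟨M *ᵥ x, hmem⟩ = c ⬝ᵥ x := by
      have h3 : M.mulVecLin.quotKerEquivRange.symm ⟨M *ᵥ x, hmem⟩
          = Submodule.Quotient.mk x := by
        have := LinearMap.quotKerEquivRange_symm_apply_image M.mulVecLin x
          (by simpa using hmem)
        simpa using this
      simp [f, h3]
    simp only [h2] at h1
    exact h1.symm
  have : c = M *ᵥ (-u) := by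
    apply dot_ext
    intro x
    rw [key x]
    rw [dotProduct_comm, dotProduct_mulVec, ← Matrix.mulVec_transpose, hM]
    rw [dotProduct_comm]
    simp [Matrix.mulVec_neg, Matrix.neg_mulVec, neg_dotProduct, dotProduct_neg, dotProduct_comm]
  exact ⟨-u, this.symm⟩

/-- rank-two alternating square `c ∧ w` -/
def phiL (c : Fin n → K) : (Fin n → K) →ₗ[K] Matrix (Fin n) (Fin n) K where
  toFun w := vecMulVec c w - vecMulVec w c
  map_add' u v := by
    ext i j
    simp [vecMulVec_apply]
    ring
  map_smul' t u := by
    ext i j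
    simp [vecMulVec_apply]
    ring

lemma vecMulVec_mulVec (c w x : Fin n → K) :
    vecMulVec c w *ᵥ x = (w ⬝ᵥ x) • c := by
  funext i
  simp only [vecMulVec_apply, mulVec, dotProduct, Pi.smul_apply, smul_eq_mul,
    Finset.sum_mul, Finset.mul_sum]
  refine Finset.sum_congr rfl fun j _ => by ring

lemma phiL_mulVec (c w x : Fin n → K) :
    phiL c w *ᵥ x = (w ⬝ᵥ x) • c - (c ⬝ᵥ x) • w := by
  simp [phiL, Matrix.sub_mulVec, _root_.vecMulVec_mulVec]

lemma dot_phiL (c w x y : Fin n → K) :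
    x ⬝ᵥ phiL c w *ᵥ y = (c ⬝ᵥ x) * (w ⬝ᵥ y) - (w ⬝ᵥ x) * (c ⬝ᵥ y) := by
  rw [phiL_mulVec, dotProduct_sub, dotProduct_smul, dotProduct_smul]
  rw [dotProduct_comm x c, dotProduct_comm x w]
  ring_nf

lemma phiL_alt (c w : Fin n → K) (x : Fin n → K) : x ⬝ᵥ phiL c w *ᵥ x = 0 := by
  rw [dot_phiL]; ring

@[simp] lemma phiL_self (c : Fin n → K) : phiL c c = 0 := by
  ext i j; simp [phiL, vecMulVec_apply]

/-- the rank increases strictly if the kernel shrinks strictly -/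
lemma rank_lt_of_ker_lt {M θ : Matrix (Fin n) (Fin n) K}
    (h : LinearMap.ker θ.mulVecLin < LinearMap.ker M.mulVecLin) : M.rank < θ.rank := by
  have h1 := LinearMap.finrank_range_add_finrank_ker M.mulVecLin
  have h2 := LinearMap.finrank_range_add_finrank_ker θ.mulVecLin
  have h3 : finrank K ↥(LinearMap.ker θ.mulVecLin) < finrank K ↥(LinearMap.ker M.mulVecLin) :=
    Submodule.finrank_lt_finrank_of_lt h
  have hn : finrank K (Fin n → K) = n := by simp
  rw [hn] at h1 h2
  have e1 : M.rank = finrank K ↥(LinearMap.range M.mulVecLin) := rfl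
  have e2 : θ.rank = finrank K ↥(LinearMap.range θ.mulVecLin) := rfl
  omega

lemma finrank_sup_span {U : Submodule K (Fin n → K)} {u : Fin n → K} (hu : u ∉ U) :
    finrank K ↥(U ⊔ K ∙ u) = finrank K ↥U + 1 := by
  have hu0 : u ≠ 0 := fun h => hu (h ▸ U.zero_mem)
  have hbot : U ⊓ (K ∙ u) = ⊥ := by
    rw [Submodule.eq_bot_iff]
    rintro x ⟨hxU, hxu⟩
    obtain ⟨t, rfl⟩ := Submodule.mem_span_singleton.mp hxu
    rcases eq_or_ne t 0 with rfl | ht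
    · simp
    · exact absurd ((Submodule.smul_mem_iff U ht).mp hxU) hu
  have := Submodule.finrank_sup_add_finrank_inf_eq U (K ∙ u)
  rw [hbot, finrank_bot, finrank_span_singleton hu0] at this
  omega

lemma alt_rank_even (M : Matrix (Fin n) (Fin n) K) (hM : ∀ x, x ⬝ᵥ M *ᵥ x = 0) :
    Even M.rank := by
  suffices h : ∀ (k : ℕ) (M : Matrix (Fin n) (Fin n) K), M.rank = k →
      (∀ x, x ⬝ᵥ M *ᵥ x = 0) → Even M.rank from h M.rank M rfl hM
  intro k
  induction k using Nat.strong_induction_on with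
  | _ k ih =>
    intro M hk hM
    rcases eq_or_ne M 0 with rfl | hM0
    · simp
    have hex : ∃ i j, M i j ≠ 0 := by
      by_contra h
      push_neg at h
      exact hM0 (by ext i j; simpa using h i j)
    obtain ⟨i, j, hij⟩ := hex
    set u : Fin n → K := Pi.single i 1 with hu_def
    set v : Fin n → K := Pi.single j 1 with hv_def
    set β : K := M i j with hβ_def
    have hβuv : u ⬝ᵥ M *ᵥ v = β := entry_eq M i j
    set w1 : Fin n → K := M *ᵥ u with hw1
    set w2 : Fin n → K := M *ᵥ v with hw2
    set M' : Matrix (Fin n) (Fin n) K := M - β⁻¹ • phiL w1 w2 with hM'_def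
    have hM'mul : ∀ x, M' *ᵥ x = M *ᵥ x - β⁻¹ • ((w2 ⬝ᵥ x) • w1 - (w1 ⬝ᵥ x) • w2) := by
      intro x
      rw [hM'_def, Matrix.sub_mulVec, Matrix.smul_mulVec, phiL_mulVec]
    have hM'alt : ∀ x, x ⬝ᵥ M' *ᵥ x = 0 := by
      intro x
      rw [hM'_def, Matrix.sub_mulVec, dotProduct_sub, hM x, Matrix.smul_mulVec,
        dotProduct_smul, phiL_alt, smul_zero, sub_zero]
    -- dot products with w1 w2
    have hw1x : ∀ x, w1 ⬝ᵥ x = -(u ⬝ᵥ M *ᵥ x) := by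
      intro x; rw [hw1, dotProduct_comm, alt_skew hM x u]
    have hw2x : ∀ x, w2 ⬝ᵥ x = -(v ⬝ᵥ M *ᵥ x) := by
      intro x; rw [hw2, dotProduct_comm, alt_skew hM x v]
    have hvu : v ⬝ᵥ M *ᵥ u = -β := by rw [alt_skew hM, hβuv]
    -- kernel identification
    have hkerM : LinearMap.ker M.mulVecLin ≤ LinearMap.ker M'.mulVecLin := by
      intro x hx
      have hx' : M *ᵥ x = 0 := by simpa using hx
      have h1 : w1 ⬝ᵥ x = 0 := by rw [hw1x, hx']; simp
      have h2 : w2 ⬝ᵥ x = 0 := by rw [hw2x, hx']; simp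
      simp [LinearMap.mem_ker, mulVecLin_apply, hM'mul, hx', h1, h2]
    have hker_u : M' *ᵥ u = 0 := by
      have h1 : w1 ⬝ᵥ u = 0 := by rw [hw1x, hM u]; simp
      have h2 : w2 ⬝ᵥ u = 0 ∨ True := Or.inr trivial
      have h2' : w2 ⬝ᵥ u = -(v ⬝ᵥ M *ᵥ u) := hw2x u
      rw [hM'mul, h1, h2', hvu]
      simp [hw1]
      rw [smul_smul, inv_mul_cancel₀ hij]
      simp
    have hker_v : M' *ᵥ v = 0 := by
      have h2 : w2 ⬝ᵥ v = 0 := by rw [hw2x, hM v]; simp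
      have h1 : w1 ⬝ᵥ v = -(u ⬝ᵥ M *ᵥ v) := hw1x v
      rw [hM'mul, h2, h1, hβuv]
      simp [hw2]
      rw [smul_smul, inv_mul_cancel₀ hij]
      simp
    have hkerM' : LinearMap.ker M'.mulVecLin
        = (LinearMap.ker M.mulVecLin ⊔ K ∙ u) ⊔ K ∙ v := by
      apply le_antisymm
      · intro x hx
        have hx' : M' *ᵥ x = 0 := by simpa using hx
        rw [hM'mul] at hx'
        set z : Fin n → K := β⁻¹ • ((w2 ⬝ᵥ x) • u - (w1 ⬝ᵥ x) • v) with hz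
        have hMz : M *ᵥ z = β⁻¹ • ((w2 ⬝ᵥ x) • w1 - (w1 ⬝ᵥ x) • w2) := by
          rw [hz, Matrix.mulVec_smul, Matrix.mulVec_sub, Matrix.mulVec_smul, Matrix.mulVec_smul]
        have hxz : M *ᵥ (x - z) = 0 := by
          rw [Matrix.mulVec_sub, hMz, sub_eq_zero]
          exact sub_eq_zero.mp hx'
        have hxzker : x - z ∈ (LinearMap.ker M.mulVecLin ⊔ K ∙ u) ⊔ K ∙ v := by
          apply Submodule.mem_sup_left; apply Submodule.mem_sup_left
          simpa [LinearMap.mem_ker] using hxz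
        have hzmem : z ∈ (LinearMap.ker M.mulVecLin ⊔ K ∙ u) ⊔ K ∙ v := by
          rw [hz]
          apply Submodule.smul_mem
          apply Submodule.sub_mem
          · apply Submodule.mem_sup_left; apply Submodule.mem_sup_right
            exact Submodule.smul_mem _ _ (Submodule.mem_span_singleton_self u)
          · apply Submodule.mem_sup_right
            exact Submodule.smul_mem _ _ (Submodule.mem_span_singleton_self v)
        simpa using Submodule.add_mem _ hxzker hzmem
      · apply sup_le
        apply sup_le
        · exact hkerM
        · rw [Submodule.span_singleton_le_iff_mem]
          simpa [LinearMap.mem_ker] using hker_u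
        · rw [Submodule.span_singleton_le_iff_mem]
          simpa [LinearMap.mem_ker] using hker_v
    -- dimension count
    have hunotker : u ∉ LinearMap.ker M.mulVecLin := by
      intro h
      have : M *ᵥ u = 0 := by simpa using h
      rw [this] at hvu
      simp at hvu
      exact hij hvu
    have hvnot : v ∉ LinearMap.ker M.mulVecLin ⊔ K ∙ u := by
      intro h
      obtain ⟨k, hk, y, hy, hkv⟩ := Submodule.mem_sup.mp h
      obtain ⟨t, rfl⟩ := Submodule.mem_span_singleton.mp hy
      have hk' : M *ᵥ k = 0 := by simpa using hk
      have : u ⬝ᵥ M *ᵥ v = 0 := by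
        rw [← hkv, Matrix.mulVec_add, Matrix.mulVec_smul, hk', dotProduct_add]
        simp [dotProduct_smul, hM u]
      rw [hβuv] at this
      exact hij this
    have hfr1 : finrank K ↥(LinearMap.ker M.mulVecLin ⊔ K ∙ u)
        = finrank K ↥(LinearMap.ker M.mulVecLin) + 1 := finrank_sup_span hunotker
    have hfr2 : finrank K ↥(LinearMap.ker M'.mulVecLin)
        = finrank K ↥(LinearMap.ker M.mulVecLin) + 2 := by
      rw [hkerM', finrank_sup_span hvnot, hfr1]
    have h1 := LinearMap.finrank_range_add_finrank_ker M.mulVecLin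
    have h2 := LinearMap.finrank_range_add_finrank_ker M'.mulVecLin
    have hn : finrank K (Fin n → K) = n := by simp
    rw [hn] at h1 h2
    have e1 : M.rank = finrank K ↥(LinearMap.range M.mulVecLin) := rfl
    have e2 : M'.rank = finrank K ↥(LinearMap.range M'.mulVecLin) := rfl
    have hrank : M.rank = M'.rank + 2 := by omega
    have hlt : M'.rank < k := by omega
    have := ih M'.rank hlt M' rfl hM'alt
    rw [hrank]
    rcases this with ⟨t, ht⟩
    exact ⟨t + 1, by omega⟩

lemma dotL_surjective {c : Fin n → K} (hc : c ≠ 0) : Function.Surjective (dotL c) := by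
  obtain ⟨i, hi⟩ : ∃ i, c i ≠ 0 := by
    by_contra h; push_neg at h; exact hc (funext h)
  intro t
  refine ⟨(t * (c i)⁻¹) • (Pi.single i 1 : Fin n → K), ?_⟩
  simp [dotProduct_smul, dotProduct_single]
  field_simp

lemma isCoatom_ker_dotL {c : Fin n → K} (hc : c ≠ 0) : IsCoatom (LinearMap.ker (dotL c)) := by
  have : IsSimpleModule K K := isSimpleModule_iff_finrank_eq_one.mpr (finrank_self K)
  exact LinearMap.isCoatom_ker_of_surjective (dotL_surjective hc)

/-- any alternating matrix vanishing on the hyperplane `c^⊥` has the form `c ∧ w` -/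
lemma matHyp_rep {D : Submodule K (Matrix (Fin n) (Fin n) K)} {c : Fin n → K} (hc : c ≠ 0)
    {N : Matrix (Fin n) (Fin n) K} (hN : N ∈ matHyp D (LinearMap.ker (dotL c)))
    (hNalt : ∀ x, x ⬝ᵥ N *ᵥ x = 0) : ∃ w, N = phiL c w := by
  obtain ⟨i0, hi0⟩ : ∃ i, c i ≠ 0 := by
    by_contra h; push_neg at h; exact hc (funext h)
  obtain ⟨e, he⟩ : ∃ e : Fin n → K, c ⬝ᵥ e = 1 := by
    refine ⟨(c i0)⁻¹ • (Pi.single i0 1 : Fin n → K), ?_⟩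
    simp [dotProduct_smul, dotProduct_single]
    field_simp
  refine ⟨-(N *ᵥ e), ?_⟩
  have key : ∀ x y, x ⬝ᵥ N *ᵥ y = x ⬝ᵥ phiL c (-(N *ᵥ e)) *ᵥ y := by
    intro x y
    set α : K := c ⬝ᵥ x
    set γ : K := c ⬝ᵥ y
    set hx : Fin n → K := x - α • e with hhx
    set hy : Fin n → K := y - γ • e with hhy
    have hxH : hx ∈ LinearMap.ker (dotL c) := by
      simp [hhx, LinearMap.mem_ker, dotProduct_sub, dotProduct_smul, he]
      exact sub_self _
    have hyH : hy ∈ LinearMap.ker (dotL c) := by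
      simp [hhy, LinearMap.mem_ker, dotProduct_sub, dotProduct_smul, he]
      exact sub_self _
    have hvan := hN.2 hx hxH hy hyH
    -- expand LHS with x = hx + α•e, y = hy + γ•e
    have hxe : x = hx + α • e := by rw [hhx]; abel
    have hye : y = hy + γ • e := by rw [hhy]; abel
    have hee : e ⬝ᵥ N *ᵥ e = 0 := hNalt e
    have lhs : x ⬝ᵥ N *ᵥ y = γ * (hx ⬝ᵥ N *ᵥ e) + α * (e ⬝ᵥ N *ᵥ hy) := by
      conv_lhs => rw [hxe, hye]
      simp only [Matrix.mulVec_add, Matrix.mulVec_smul, dotProduct_add, add_dotProduct,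
        dotProduct_smul, smul_dotProduct, smul_eq_mul]
      linear_combination hvan + α * γ * hee
    have hw_y : (-(N *ᵥ e)) ⬝ᵥ y = e ⬝ᵥ N *ᵥ hy := by
      rw [neg_dotProduct, dotProduct_comm, alt_skew hNalt y e, neg_neg]
      conv_lhs => rw [hye]
      simp only [Matrix.mulVec_add, Matrix.mulVec_smul, dotProduct_add, add_dotProduct,
        dotProduct_smul, smul_dotProduct, smul_eq_mul]
      linear_combination γ * hee
    have hw_x : (-(N *ᵥ e)) ⬝ᵥ x = -(hx ⬝ᵥ N *ᵥ e) := by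
      rw [neg_dotProduct, dotProduct_comm]
      conv_lhs => rw [hxe]
      simp only [Matrix.mulVec_add, Matrix.mulVec_smul, dotProduct_add, add_dotProduct,
        dotProduct_smul, smul_dotProduct, smul_eq_mul]
      linear_combination -α * hee
    rw [lhs, dot_phiL, hw_y, hw_x]
    ring
  ext i j
  rw [← entry_eq N i j, ← entry_eq (phiL c (-(N *ᵥ e))) i j, key]

/-- `dim V_c ≥ dim (matHyp D H_c) + 1` -/
lemma finrank_comap_phiL {D : Submodule K (Matrix (Fin n) (Fin n) K)}
    {H : Submodule K (Fin n → K)} {c : Fin n → K} (hc : c ≠ 0)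
    (hrep : ∀ N ∈ matHyp D H, ∃ w, N = phiL c w)
    (hmem : ∀ w, phiL c w ∈ D → phiL c w ∈ matHyp D H)
    (hDsub : ∀ N ∈ matHyp D H, N ∈ D) :
    finrank K ↥(matHyp D H) + 1 ≤ finrank K ↥(Submodule.comap (phiL c) D) := by
  set V := Submodule.comap (phiL c) D with hV
  have hmem' : ∀ x : ↥V, phiL c ↑x ∈ matHyp D H := fun x => hmem _ x.2
  set F : ↥V →ₗ[K] ↥(matHyp D H) :=
    ((phiL c).comp V.subtype).codRestrict (matHyp D H) hmem' with hF
  have hsurj : Function.Surjective F := by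
    rintro ⟨N, hN⟩
    obtain ⟨w, rfl⟩ := hrep N hN
    refine ⟨⟨w, ?_⟩, rfl⟩
    exact hDsub _ hN
  have hrank := LinearMap.finrank_range_add_finrank_ker F
  rw [LinearMap.range_eq_top.mpr hsurj, finrank_top] at hrank
  have hcV : c ∈ V := by
    simp [hV, Submodule.mem_comap, phiL_self, D.zero_mem]
  have hker : (⟨c, hcV⟩ : ↥V) ∈ LinearMap.ker F := by
    apply Subtype.ext
    exact phiL_self c
  have hne : (⟨c, hcV⟩ : ↥V) ≠ 0 := by
    intro h
    exact hc (congrArg Subtype.val h)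
  have hne2 : (⟨⟨c, hcV⟩, hker⟩ : ↥(LinearMap.ker F)) ≠ 0 := by
    intro h
    exact hne (congrArg Subtype.val h)
  have : 0 < finrank K ↥(LinearMap.ker F) := by
    rw [Module.finrank_pos_iff (R := K) (M := ↥(LinearMap.ker F))]
    exact nontrivial_of_ne _ _ hne2
  omega

lemma exists_ker_dot {M : Matrix (Fin n) (Fin n) K} (hM : Mᵀ = -M) {c : Fin n → K}
    (hc : c ∉ LinearMap.range M.mulVecLin) : ∃ k, M *ᵥ k = 0 ∧ c ⬝ᵥ k ≠ 0 := by
  by_contra h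
  push_neg at h
  exact hc (mem_range_of_perp_ker hM fun x hx => by
    by_contra h2
    exact h2 (h x hx))

lemma ker_lt_aux {M θ : Matrix (Fin n) (Fin n) K} (hMt : Mᵀ = -M)
    {c : Fin n → K} (hc : c ∉ LinearMap.range M.mulVecLin)
    (hclaim : ∀ x, θ *ᵥ x = 0 → M *ᵥ x = 0 ∧ c ⬝ᵥ x = 0) :
    M.rank < θ.rank := by
  apply rank_lt_of_ker_lt
  rw [SetLike.lt_iff_le_and_exists]
  constructor
  · intro x hx
    simp only [LinearMap.mem_ker, mulVecLin_apply] at hx ⊢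
    exact (hclaim x hx).1
  · obtain ⟨k, hk1, hk2⟩ := exists_ker_dot hMt hc
    refine ⟨k, by simpa [LinearMap.mem_ker] using hk1, ?_⟩
    intro hk
    simp only [LinearMap.mem_ker, mulVecLin_apply] at hk
    exact hk2 (hclaim k hk).2

lemma rank_L1 {M : Matrix (Fin n) (Fin n) K} (hMalt : ∀ x, x ⬝ᵥ M *ᵥ x = 0) (hMt : Mᵀ = -M)
    {c w : Fin n → K} (hc : c ∉ LinearMap.range M.mulVecLin)
    (hw : w ∉ LinearMap.range M.mulVecLin ⊔ K ∙ c) :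
    M.rank < (M + phiL c w).rank := by
  apply ker_lt_aux hMt hc
  intro x hx
  rw [Matrix.add_mulVec, phiL_mulVec] at hx
  have hcx : c ⬝ᵥ x = 0 := by
    by_contra hcx
    apply hw
    have h1 : (c ⬝ᵥ x) • w = M *ᵥ x + (w ⬝ᵥ x) • c := by
      linear_combination (norm := module) -hx
    have : w = (c ⬝ᵥ x)⁻¹ • (M *ᵥ x) + ((c ⬝ᵥ x)⁻¹ * (w ⬝ᵥ x)) • c := by
      calc w = (c ⬝ᵥ x)⁻¹ • ((c ⬝ᵥ x) • w) := by rw [smul_smul, inv_mul_cancel₀ hcx, one_smul]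
      _ = (c ⬝ᵥ x)⁻¹ • (M *ᵥ x + (w ⬝ᵥ x) • c) := by rw [h1]
      _ = (c ⬝ᵥ x)⁻¹ • (M *ᵥ x) + ((c ⬝ᵥ x)⁻¹ * (w ⬝ᵥ x)) • c := by
          rw [smul_add, smul_smul]
    rw [this]
    apply Submodule.add_mem
    · exact Submodule.mem_sup_left ⟨(c ⬝ᵥ x)⁻¹ • x, by simp [Matrix.mulVec_smul]⟩
    · exact Submodule.mem_sup_right (Submodule.smul_mem _ _ (Submodule.mem_span_singleton_self c))
  have hwx : w ⬝ᵥ x = 0 := by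
    by_contra hwx
    apply hc
    have h1 : (w ⬝ᵥ x) • c = -(M *ᵥ x) := by
      rw [hcx] at hx
      linear_combination (norm := module) hx
    have : c = (w ⬝ᵥ x)⁻¹ • (-(M *ᵥ x)) := by
      rw [← h1, smul_smul, inv_mul_cancel₀ hwx, one_smul]
    rw [this]
    exact ⟨(w ⬝ᵥ x)⁻¹ • (-x), by simp [Matrix.mulVec_smul, Matrix.mulVec_neg]⟩
  rw [hcx, hwx] at hx
  refine ⟨?_, hcx⟩
  simpa using hx

lemma rank_L2 {M : Matrix (Fin n) (Fin n) K} (hMalt : ∀ x, x ⬝ᵥ M *ᵥ x = 0) (hMt : Mᵀ = -M)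
    {c c' : Fin n → K}
    (hind : ∀ α β : K, α • c + β • c' ∈ LinearMap.range M.mulVecLin → α = 0 ∧ β = 0)
    {a a' : Fin n → K} (hβ : a ⬝ᵥ M *ᵥ a' ≠ 0) :
    M.rank < (M + phiL c (M *ᵥ a) + phiL c' (M *ᵥ a')).rank := by
  have hc : c ∉ LinearMap.range M.mulVecLin := by
    intro h
    have h1 := (hind 1 0 (by simpa using h)).1
    exact one_ne_zero h1
  apply ker_lt_aux hMt hc
  intro x hx
  rw [Matrix.add_mulVec, Matrix.add_mulVec, phiL_mulVec, phiL_mulVec] at hx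
  have hmem : ((M *ᵥ a) ⬝ᵥ x) • c + ((M *ᵥ a') ⬝ᵥ x) • c' ∈ LinearMap.range M.mulVecLin := by
    have heq : ((M *ᵥ a) ⬝ᵥ x) • c + ((M *ᵥ a') ⬝ᵥ x) • c'
        = M *ᵥ ((c ⬝ᵥ x) • a + (c' ⬝ᵥ x) • a' - x) := by
      rw [Matrix.mulVec_sub, Matrix.mulVec_add, Matrix.mulVec_smul, Matrix.mulVec_smul]
      linear_combination (norm := module) hx
    refine ⟨(c ⬝ᵥ x) • a + (c' ⬝ᵥ x) • a' - x, ?_⟩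
    rw [mulVecLin_apply]
    exact heq.symm
  obtain ⟨hwx, hw'x⟩ := hind _ _ hmem
  rw [hwx, hw'x] at hx
  have hMx : M *ᵥ x = (c ⬝ᵥ x) • (M *ᵥ a) + (c' ⬝ᵥ x) • (M *ᵥ a') := by
    linear_combination (norm := module) hx
  -- dot with a
  have haMx : a ⬝ᵥ M *ᵥ x = -((M *ᵥ a) ⬝ᵥ x) := by
    rw [dotProduct_comm (M *ᵥ a) x, alt_skew hMalt x a, neg_neg]
  have h1 : a ⬝ᵥ M *ᵥ x = (c' ⬝ᵥ x) * (a ⬝ᵥ M *ᵥ a') := by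
    rw [hMx, dotProduct_add, dotProduct_smul, dotProduct_smul, smul_eq_mul, smul_eq_mul,
      hMalt a, mul_zero, zero_add]
  have hc'x : c' ⬝ᵥ x = 0 := by
    have h0 : (c' ⬝ᵥ x) * (a ⬝ᵥ M *ᵥ a') = 0 := by rw [← h1, haMx, hwx, neg_zero]
    exact (mul_eq_zero.mp h0).resolve_right hβ
  have ha'Mx : a' ⬝ᵥ M *ᵥ x = -((M *ᵥ a') ⬝ᵥ x) := by
    rw [dotProduct_comm (M *ᵥ a') x, alt_skew hMalt x a', neg_neg]
  have h2 : a' ⬝ᵥ M *ᵥ x = -((c ⬝ᵥ x) * (a ⬝ᵥ M *ᵥ a')) := by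
    rw [hMx, dotProduct_add, dotProduct_smul, dotProduct_smul, smul_eq_mul, smul_eq_mul,
      hMalt a', mul_zero, add_zero, alt_skew hMalt a' a]
    ring
  have hcx : c ⬝ᵥ x = 0 := by
    have h0 : (c ⬝ᵥ x) * (a ⬝ᵥ M *ᵥ a') = 0 := by
      have h3 := h2
      rw [ha'Mx, hw'x, neg_zero] at h3
      linear_combination h3
    exact (mul_eq_zero.mp h0).resolve_right hβ
  rw [hcx, hc'x] at hMx
  refine ⟨?_, hcx⟩
  simpa using hMx


end aux

open Module in
/-- Over an arbitrary field: if `𝒮` is a nonempty affine subspace of alternating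
`n × n` matrices whose direction `S` satisfies `dim S_H ≥ s` for every linear
hyperplane `H` of `Kⁿ`, then `𝒮` contains a matrix of rank at least `2s`. -/
theorem stmt9 {K : Type*} [Field K] (n s : ℕ) (hs : 2 * s ≤ n)
    (𝒮 : AffineSubspace K (Matrix (Fin n) (Fin n) K))
    (hne : (𝒮 : Set (Matrix (Fin n) (Fin n) K)).Nonempty)
    (halt : ∀ M ∈ 𝒮, ∀ X : Fin n → K, X ⬝ᵥ M *ᵥ X = 0)
    (hdim : ∀ H : Submodule K (Fin n → K), IsCoatom H →
      s ≤ Module.finrank K (matHyp 𝒮.direction H)) :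
    ∃ M ∈ 𝒮, 2 * s ≤ M.rank := by
  classical
  obtain ⟨M₀, hM₀⟩ := hne
  rcases Nat.eq_zero_or_pos s with rfl | hs0
  · exact ⟨M₀, hM₀, by simp⟩
  set D := 𝒮.direction with hD
  -- direction elements are alternating
  have hDalt : ∀ N ∈ D, ∀ x : Fin n → K, x ⬝ᵥ N *ᵥ x = 0 := by
    intro N hN x
    have h1 : N ∈ (· -ᵥ M₀) '' (𝒮 : Set (Matrix (Fin n) (Fin n) K)) := by
      rw [← AffineSubspace.coe_direction_eq_vsub_set_right hM₀]
      exact hN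
    obtain ⟨P, hP, rfl⟩ := h1
    show x ⬝ᵥ (P - M₀) *ᵥ x = 0
    rw [Matrix.sub_mulVec, dotProduct_sub, halt P hP x, halt M₀ hM₀ x, sub_zero]
  -- a maximal rank element
  have hbdd : BddAbove (Matrix.rank '' (𝒮 : Set (Matrix (Fin n) (Fin n) K))) := by
    refine ⟨n, ?_⟩
    rintro k ⟨P, hP, rfl⟩
    exact P.rank_le_width
  have hSne : (Matrix.rank '' (𝒮 : Set (Matrix (Fin n) (Fin n) K))).Nonempty :=
    ⟨M₀.rank, ⟨M₀, hM₀, rfl⟩⟩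
  obtain ⟨M, hM, hMr⟩ := Nat.sSup_mem hSne hbdd
  have hmax : ∀ P ∈ 𝒮, P.rank ≤ M.rank := by
    intro P hP
    rw [hMr]
    exact le_csSup hbdd ⟨P, hP, rfl⟩
  refine ⟨M, hM, ?_⟩
  by_contra hcon
  push_neg at hcon
  have hMalt := halt M hM
  have hMt : Mᵀ = -M := alt_transpose hMalt
  obtain ⟨t, ht⟩ := alt_rank_even M hMalt
  set R := LinearMap.range M.mulVecLin with hR
  have hfinR : finrank K ↥R = M.rank := rfl
  have hfin : finrank K (Fin n → K) = n := by simp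
  have hkerM := LinearMap.finrank_range_add_finrank_ker M.mulVecLin
  rw [hfin] at hkerM
  have hrn : M.rank + 2 ≤ n := by omega
  -- choose c, c'
  have hcex : ∃ c, c ∉ R := by
    by_contra h
    push_neg at h
    have htop : R = ⊤ := by rw [Submodule.eq_top_iff']; exact h
    have : finrank K ↥R = n := by rw [htop, finrank_top, hfin]
    omega
  obtain ⟨c, hcR⟩ := hcex
  have hc0 : c ≠ 0 := fun h => hcR (h ▸ R.zero_mem)
  have hc'ex : ∃ c', c' ∉ R ⊔ K ∙ c := by
    by_contra h
    push_neg at h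
    have htop : R ⊔ (K ∙ c) = ⊤ := by rw [Submodule.eq_top_iff']; exact h
    have h2 : finrank K ↥(R ⊔ (K ∙ c)) = n := by rw [htop, finrank_top, hfin]
    rw [finrank_sup_span hcR, hfinR] at h2
    omega
  obtain ⟨c', hc'⟩ := hc'ex
  have hc'R : c' ∉ R := fun h => hc' (Submodule.mem_sup_left h)
  have hc'0 : c' ≠ 0 := fun h => hc'R (h ▸ R.zero_mem)
  -- independence mod R
  have hind : ∀ α β : K, α • c + β • c' ∈ R → α = 0 ∧ β = 0 := by
    intro α β hmem
    by_cases hβ : β = 0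
    · subst hβ
      rw [zero_smul, add_zero] at hmem
      refine ⟨?_, rfl⟩
      by_contra hα
      exact hcR ((Submodule.smul_mem_iff R hα).mp hmem)
    · exfalso
      apply hc'
      have heq : c' = β⁻¹ • (α • c + β • c') + (-(β⁻¹ * α)) • c := by
        match_scalars <;> field_simp <;> ring
      rw [heq]
      exact Submodule.add_mem _
        (Submodule.mem_sup_left (Submodule.smul_mem _ _ hmem))
        (Submodule.mem_sup_right (Submodule.smul_mem _ _ (Submodule.mem_span_singleton_self c)))
  -- dimension of V_x
  have hVc : ∀ x : Fin n → K, x ≠ 0 → s + 1 ≤ finrank K ↥(Submodule.comap (phiL x) D) := by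
    intro x hx0
    have hd := hdim _ (isCoatom_ker_dotL hx0)
    have hkey := finrank_comap_phiL (D := D) (H := LinearMap.ker (dotL x)) hx0
      (fun N hN => matHyp_rep hx0 hN (hDalt N hN.1))
      (fun w hw => ⟨hw, fun X hX Y hY => by
        have hX0 : x ⬝ᵥ X = 0 := by simpa using hX
        have hY0 : x ⬝ᵥ Y = 0 := by simpa using hY
        rw [dot_phiL, hX0, hY0]
        ring⟩)
      (fun N hN => hN.1)
    omega
  -- V_x ⊆ R ⊔ ⟨x⟩ by maximality
  have hVsub : ∀ x, x ∉ R → ∀ w ∈ Submodule.comap (phiL x) D, w ∈ R ⊔ K ∙ x := by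
    intro x hx w hw
    by_contra hwn
    have h1 := rank_L1 hMalt hMt hx hwn
    have h2 : M + phiL x w ∈ 𝒮 := by
      have h3 : phiL x w ∈ D := hw
      have := AffineSubspace.vadd_mem_of_mem_direction (hD ▸ h3) hM
      simpa [vadd_eq_add, add_comm] using this
    exact absurd (hmax _ h2) (not_le.mpr h1)
  -- the spaces W_x
  have hW : ∀ x, x ≠ 0 → x ∉ R → s ≤ finrank K ↥(Submodule.comap (phiL x) D ⊓ R) := by
    intro x hx0 hx
    have h1 := hVc x hx0
    have h2 : Submodule.comap (phiL x) D ⊔ R ≤ R ⊔ K ∙ x := by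
      apply sup_le
      · intro w hw
        exact hVsub x hx w hw
      · exact le_sup_left
    have h3 := Submodule.finrank_sup_add_finrank_inf_eq (Submodule.comap (phiL x) D) R
    have h4 : finrank K ↥(Submodule.comap (phiL x) D ⊔ R) ≤ M.rank + 1 := by
      calc finrank K ↥(Submodule.comap (phiL x) D ⊔ R)
          ≤ finrank K ↥(R ⊔ K ∙ x) := Submodule.finrank_mono h2
        _ = M.rank + 1 := by rw [finrank_sup_span hx, hfinR]
    omega
  set Wc := Submodule.comap (phiL c) D ⊓ R with hWc
  set Wc' := Submodule.comap (phiL c') D ⊓ R with hWc'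
  have hWcs : s ≤ finrank K ↥Wc := hW c hc0 hcR
  have hWc's : s ≤ finrank K ↥Wc' := hW c' hc'0 hc'R
  -- orthogonality
  have horth : ∀ a : Fin n → K, M *ᵥ a ∈ Wc → ∀ a' : Fin n → K, M *ᵥ a' ∈ Wc' →
      a ⬝ᵥ M *ᵥ a' = 0 := by
    intro a ha a' ha'
    by_contra hβ
    have h1 := rank_L2 hMalt hMt hind hβ
    have h2 : M + phiL c (M *ᵥ a) + phiL c' (M *ᵥ a') ∈ 𝒮 := by
      have h3 : phiL c (M *ᵥ a) + phiL c' (M *ᵥ a') ∈ D :=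
        D.add_mem ha.1 ha'.1
      have := AffineSubspace.vadd_mem_of_mem_direction (hD ▸ h3) hM
      have h4 : (phiL c (M *ᵥ a) + phiL c' (M *ᵥ a')) +ᵥ M
          = M + phiL c (M *ᵥ a) + phiL c' (M *ᵥ a') := by
        rw [vadd_eq_add]; abel
      rwa [h4] at this
    exact absurd (hmax _ h2) (not_le.mpr h1)
  -- the preimage A and its dimension
  set A := Submodule.comap M.mulVecLin Wc with hA
  have hWcR : Wc ≤ R := inf_le_right
  have hg : ∀ x : ↥A, M.mulVecLin ↑x ∈ Wc := fun x => x.2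
  set g : ↥A →ₗ[K] ↥Wc := (M.mulVecLin.comp A.subtype).codRestrict Wc hg with hgdef
  have hgsurj : Function.Surjective g := by
    rintro ⟨w, hw⟩
    obtain ⟨a, ha⟩ := hWcR hw
    refine ⟨⟨a, ?_⟩, ?_⟩
    · show M.mulVecLin a ∈ Wc
      rw [ha]; exact hw
    · apply Subtype.ext
      exact ha
  have hgrk := LinearMap.finrank_range_add_finrank_ker g
  rw [LinearMap.range_eq_top.mpr hgsurj, finrank_top] at hgrk
  -- kernel of g contains ker M
  have hkerinj : finrank K ↥(LinearMap.ker M.mulVecLin) ≤ finrank K ↥(LinearMap.ker g) := by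
    have hmemA : ∀ x : ↥(LinearMap.ker M.mulVecLin), (↑x : Fin n → K) ∈ A := by
      intro x
      show M.mulVecLin ↑x ∈ Wc
      rw [x.2]
      exact Wc.zero_mem
    have hmemk : ∀ x : ↥(LinearMap.ker M.mulVecLin),
        (⟨↑x, hmemA x⟩ : ↥A) ∈ LinearMap.ker g := by
      intro x
      rw [LinearMap.mem_ker]
      apply Subtype.ext
      show M.mulVecLin ↑x = 0
      exact x.2
    set j : ↥(LinearMap.ker M.mulVecLin) →ₗ[K] ↥(LinearMap.ker g) :=
      { toFun := fun x => ⟨⟨↑x, hmemA x⟩, hmemk x⟩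
        map_add' := fun x y => by ext; rfl
        map_smul' := fun t x => by ext; rfl } with hj
    have hjinj : Function.Injective j := by
      intro x y hxy
      apply Subtype.ext
      exact congrArg (fun z : ↥(LinearMap.ker g) => ((z : ↥A) : Fin n → K)) hxy
    exact LinearMap.finrank_le_finrank_of_injective hjinj
  -- Wc' is inside the annihilator of A
  set kerann := LinearMap.ker (annL A) with hkerann
  have hkerann_mem := mem_ker_annL A
  have hkerann_rank := finrank_ker_annL A
  rw [← hkerann] at hkerann_rank
  have hWc'le : Wc' ≤ kerann := by
    intro w' hw'
    rw [hkerann_mem]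
    intro a haA
    have hw'R : w' ∈ R := hw'.2
    obtain ⟨a', ha'⟩ := hw'R
    have haWc : M *ᵥ a ∈ Wc := by
      have := Submodule.mem_comap.mp haA
      simpa using this
    have ha'Wc' : M *ᵥ a' ∈ Wc' := by
      have : M *ᵥ a' = w' := by simpa using ha'
      rw [this]; exact hw'
    have h0 := horth a haWc a' ha'Wc'
    have : M *ᵥ a' = w' := by simpa using ha'
    rwa [this] at h0
  have hWc'ann : finrank K ↥Wc' ≤ finrank K ↥kerann := Submodule.finrank_mono hWc'le
  have hrr : finrank K ↥(LinearMap.range M.mulVecLin) = M.rank := rfl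
  rw [hrr] at hkerM
  omega
end
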